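/- arXiv:2107.06312 — 7 statements merged into one kernel-verified Lean document; each statement's English description precedes it below -/
import Mathlib

section
/- Let Γ = (A, Θ, p, c) be an anonymous nonatomic game with incomplete information and let (γ, T, π) be an information structure for Γ. Then every outcome induced by a Bayes Wardrop equilibrium (BWE) of Γ with information structure (γ, T, π) is a Bayes correlated Wardrop equilibrium (BCWE) of Γ. -/
open MeasureTheory

lemma integral_sum_dirac {X : Type*} [MeasurableSpace X] [MeasurableSingletonClass X]
    {ι : Type*} [Fintype ι]
    (w : ι → ℝ) (hw : ∀ i, 0 ≤ w i) (x : ι → X) (f : X → ℝ) :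
    ∫ y, f y ∂(∑ i, ENNReal.ofReal (w i) • Measure.dirac (x i)) = ∑ i, w i * f (x i) := by
  rw [integral_finset_sum_measure
    (fun i _ => (((integrable_const (f (x i))).congr (ae_eq_dirac f).symm)).smul_measure
      ENNReal.ofReal_ne_top)]
  simp [integral_smul_measure, integral_dirac, ENNReal.toReal_ofReal (hw _), smul_eq_mul]

/-- The set of flows: the simplex over the finite action set `A`. -/
def FlowSet (A : Type*) [Fintype A] : Set (A → ℝ) :=
  {y | (∀ a, 0 ≤ y a) ∧ ∑ a, y a = 1}
/-- For an anonymous nonatomic game with incomplete information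
`Γ = (A, Θ, p, c)` and any information structure `(γ, T, π)`, the outcome induced by
any Bayes Wardrop equilibrium is a Bayes correlated Wardrop equilibrium of `Γ`. -/
theorem stmt0
    {A Θ K : Type*} [Fintype A] [Nonempty A] [Fintype Θ] [Nonempty Θ]
    [Fintype K] [Nonempty K] [DecidableEq K]
    -- the prior
    (p : Θ → ℝ) (hp : ∀ θ, 0 < p θ) (hp1 : ∑ θ, p θ = 1)
    -- the (continuous) cost functions
    (c : A → (A → ℝ) → Θ → ℝ)
    (hc : ∀ a θ, ContinuousOn (fun y => c a y θ) (FlowSet A))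
    -- the information structure: population sizes, type sets, signal distribution
    (γ : K → ℝ) (hγ0 : ∀ k, 0 ≤ γ k) (hγ1 : ∑ k, γ k = 1)
    (T : K → Type*) [∀ k, Fintype (T k)] [∀ k, Nonempty (T k)] [∀ k, DecidableEq (T k)]
    (π : Θ → (∀ k, T k) → ℝ)
    (hπ0 : ∀ θ τ, 0 ≤ π θ τ) (hπ1 : ∀ θ, ∑ τ, π θ τ = 1)
    -- a strategy profile
    (σ : ∀ k, T k → A → ℝ)
    (hσ0 : ∀ k t a, 0 ≤ σ k t a) (hσ1 : ∀ k t, ∑ a, σ k t a = γ k)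
    -- its aggregate flows
    (agg : (∀ k, T k) → A → ℝ)
    (hagg : ∀ τ a, agg τ a = ∑ k, σ k (τ k) a)
    (haggF : ∀ τ, agg τ ∈ FlowSet A)
    -- the strategy profile is a Bayes Wardrop equilibrium
    (hBWE : ∀ (k : K) (t : T k) (a b : A), 0 < σ k t a →
      (∑ θ, ∑ τ ∈ Finset.univ.filter (fun τ : ∀ k, T k => τ k = t),
        p θ * π θ τ * c a (agg τ) θ) ≤
      (∑ θ, ∑ τ ∈ Finset.univ.filter (fun τ : ∀ k, T k => τ k = t),
        p θ * π θ τ * c b (agg τ) θ))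
    -- the induced outcome
    (μ : Θ → Measure ↥(FlowSet A))
    (hμ : ∀ θ, μ θ =
      ∑ τ, (ENNReal.ofReal (π θ τ)) •
        Measure.dirac (⟨agg τ, haggF τ⟩ : ↥(FlowSet A))) :
    -- conclusion: the induced outcome is a BCWE
    ∀ a b : A,
      ∑ θ, p θ * ∫ y : ↥(FlowSet A), (y : A → ℝ) a * c a (y : A → ℝ) θ ∂(μ θ) ≤
      ∑ θ, p θ * ∫ y : ↥(FlowSet A), (y : A → ℝ) a * c b (y : A → ℝ) θ ∂(μ θ) := by
  intro a b
  -- rewrite each integral as a finite sum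
  have hint : ∀ (d : A) θ, ∫ y : ↥(FlowSet A), (y : A → ℝ) a * c d (y : A → ℝ) θ ∂(μ θ)
      = ∑ τ, π θ τ * (agg τ a * c d (agg τ) θ) := by
    intro d θ
    rw [hμ θ]
    exact integral_sum_dirac (π θ) (hπ0 θ) (fun τ => (⟨agg τ, haggF τ⟩ : ↥(FlowSet A)))
      (fun y => (y : A → ℝ) a * c d (y : A → ℝ) θ)
  -- the key rearrangement
  have key : ∀ d : A, ∑ θ, p θ * ∑ τ, π θ τ * (agg τ a * c d (agg τ) θ)
      = ∑ k, ∑ t : T k, σ k t a *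
        ∑ θ, ∑ τ ∈ Finset.univ.filter (fun τ : ∀ k, T k => τ k = t),
          p θ * π θ τ * c d (agg τ) θ := by
    intro d
    have : ∀ k : K, ∑ t : T k, σ k t a *
        ∑ θ, ∑ τ ∈ Finset.univ.filter (fun τ : ∀ k, T k => τ k = t),
          p θ * π θ τ * c d (agg τ) θ
        = ∑ θ, ∑ τ, p θ * π θ τ * σ k (τ k) a * c d (agg τ) θ := by
      intro k
      simp_rw [Finset.mul_sum]
      rw [Finset.sum_comm]
      refine Finset.sum_congr rfl (fun θ _ => ?_)
      rw [← Finset.sum_fiberwise Finset.univ (fun τ : ∀ k, T k => τ k) (fun τ =>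
        p θ * π θ τ * σ k (τ k) a * c d (agg τ) θ)]
      refine Finset.sum_congr rfl (fun t _ => ?_)
      refine Finset.sum_congr rfl (fun τ hτ => ?_)
      simp only [Finset.mem_filter] at hτ
      rw [hτ.2]; ring
    simp_rw [this]
    rw [Finset.sum_comm]
    refine Finset.sum_congr rfl (fun θ _ => ?_)
    rw [Finset.sum_comm, Finset.mul_sum]
    refine Finset.sum_congr rfl (fun τ _ => ?_)
    rw [hagg]
    rw [show (∑ k, σ k (τ k) a) * c d (agg τ) θ = ∑ k, σ k (τ k) a * c d (agg τ) θ from Finset.sum_mul ..,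
      Finset.mul_sum, Finset.mul_sum]
    exact Finset.sum_congr rfl (fun k _ => by ring)
  simp_rw [hint, key]
  refine Finset.sum_le_sum (fun k _ => Finset.sum_le_sum (fun t _ => ?_))
  rcases eq_or_lt_of_le (hσ0 k t a) with h | h
  · rw [← h]; simp
  · exact mul_le_mul_of_nonneg_left (hBWE k t a b h) (le_of_lt h)
end

section
/- Let Γ = (A, c) be an anonymous nonatomic game admitting a potential Φ that is convex on 𝓕. Then a flow y ∈ 𝓕 is a Wardrop equilibrium of Γ if and only if y minimizes Φ over 𝓕, i.e., Φ(y) ≤ Φ(z) for all z ∈ 𝓕. -/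
open MeasureTheory

/-- In an anonymous nonatomic game `(A, c)` admitting a potential `Φ`
that is convex on the flow simplex, a flow `y` is a Wardrop equilibrium if and only
if it minimizes `Φ` over the flow simplex. -/
theorem stmt2 {A : Type*} [Fintype A] [Nonempty A] [DecidableEq A]
    (c : A → (A → ℝ) → ℝ) (hc : ∀ a, ContinuousOn (c a) (FlowSet A))
    (Φ : (A → ℝ) → ℝ) (hdiff : Differentiable ℝ Φ)
    (hpot : ∀ y ∈ FlowSet A, ∀ a : A, fderiv ℝ Φ y (Pi.single a 1) = c a y)
    (hconv : ConvexOn ℝ (FlowSet A) Φ)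
    (y : A → ℝ) (hy : y ∈ FlowSet A) :
    (∀ a b : A, y a * c a y ≤ y a * c b y) ↔ (∀ z ∈ FlowSet A, Φ y ≤ Φ z) := by
  classical
  have hD : ∀ v : A → ℝ, fderiv ℝ Φ y v = ∑ a, v a * c a y := by
    intro v
    have hv : v = ∑ a, v a • (Pi.single a (1 : ℝ) : A → ℝ) := by
      funext b
      simp [Finset.sum_apply, Pi.single_apply]
    calc fderiv ℝ Φ y v = fderiv ℝ Φ y (∑ a, v a • (Pi.single a (1:ℝ) : A → ℝ)) := by rw [← hv]
      _ = ∑ a, v a • fderiv ℝ Φ y ((Pi.single a (1:ℝ) : A → ℝ)) := by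
          rw [map_sum]; simp
      _ = ∑ a, v a * c a y := by
          refine Finset.sum_congr rfl fun a _ => ?_
          rw [hpot y hy a, smul_eq_mul]
  constructor
  · -- Wardrop equilibrium ⇒ minimizer
    intro hWE z hz
    set v := z - y with hvdef
    -- gradient inequality from convexity
    have hline : HasDerivAt (fun t : ℝ => Φ (y + t • v)) (fderiv ℝ Φ y v) 0 := by
      have hl : HasDerivAt (fun t : ℝ => y + t • v) v 0 := by
        simpa using (((hasDerivAt_id (0:ℝ)).smul_const v).const_add y)
      have := ((hdiff (y + (0:ℝ) • v)).hasFDerivAt.comp_hasDerivAt 0 hl)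
      rw [zero_smul, add_zero] at this
      exact this
    have hgrad : fderiv ℝ Φ y v ≤ Φ z - Φ y := by
      have htend : Filter.Tendsto (slope (fun t : ℝ => Φ (y + t • v)) 0)
          (nhdsWithin 0 (Set.Ioi 0)) (nhds (fderiv ℝ Φ y v)) := by
        have := hasDerivAt_iff_tendsto_slope.1 hline
        exact this.mono_left (nhdsWithin_mono _ (fun t ht => ne_of_gt ht))
      refine le_of_tendsto htend ?_
      filter_upwards [Ioc_mem_nhdsGT_of_mem (Set.left_mem_Ico.2 zero_lt_one)] with t ht
      have hcomb : Φ (y + t • v) ≤ (1 - t) * Φ y + t * Φ z := by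
        have h1 : y + t • v = (1 - t) • y + t • z := by
          funext a; simp [hvdef]; ring
        rw [h1]
        exact hconv.2 hy hz (by linarith [ht.2]) (le_of_lt ht.1) (by ring)
      have ht0 : (0:ℝ) < t := ht.1
      rw [slope_def_field]
      have : Φ (y + t • v) - Φ (y + (0:ℝ) • v) ≤ t * (Φ z - Φ y) := by
        simpa using by linarith [hcomb]
      calc (Φ (y + t • v) - Φ (y + (0:ℝ) • v)) / (t - 0)
          ≤ (t * (Φ z - Φ y)) / (t - 0) := by
            apply div_le_div_of_nonneg_right this ?_ |>.trans_eq rfl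
            · linarith
          _ = Φ z - Φ y := by rw [sub_zero]; exact mul_div_cancel_left₀ _ ht0.ne'
    -- nonnegativity of the derivative from the Wardrop condition
    have hS : ∀ b, (∑ a, y a * c a y) ≤ c b y := by
      intro b
      calc ∑ a, y a * c a y ≤ ∑ a, y a * c b y := Finset.sum_le_sum fun a _ => hWE a b
        _ = (∑ a, y a) * c b y := by rw [Finset.sum_mul]
        _ = c b y := by rw [hy.2, one_mul]
    have hz_ge : (∑ a, y a * c a y) ≤ ∑ a, z a * c a y := by
      calc (∑ a, y a * c a y) = (∑ a, z a) * (∑ a, y a * c a y) := by rw [hz.2, one_mul]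
        _ = ∑ a, z a * (∑ a', y a' * c a' y) := by rw [Finset.sum_mul]
        _ ≤ ∑ a, z a * c a y :=
            Finset.sum_le_sum fun a _ => mul_le_mul_of_nonneg_left (hS a) (hz.1 a)
    have hnonneg : 0 ≤ fderiv ℝ Φ y v := by
      rw [hD]
      have : ∑ a, v a * c a y = (∑ a, z a * c a y) - ∑ a, y a * c a y := by
        rw [← Finset.sum_sub_distrib]
        refine Finset.sum_congr rfl fun a _ => ?_
        simp [hvdef]; ring
      rw [this]; linarith
    linarith
  · -- minimizer ⇒ Wardrop equilibrium
    intro hmin a b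
    rcases eq_or_lt_of_le (hy.1 a) with h0 | hpos
    · rw [← h0]; simp
    rcases eq_or_ne a b with rfl | hab
    · exact le_rfl
    have hcab : c a y ≤ c b y := by
      set v : A → ℝ := Pi.single b 1 - Pi.single a 1 with hvdef
      have hcone : v ∈ posTangentConeAt (FlowSet A) y := by
        apply mem_posTangentConeAt_of_frequently_mem
        refine Filter.Eventually.frequently ?_
        filter_upwards [Ioc_mem_nhdsGT_of_mem (Set.left_mem_Ico.2 hpos)] with t ht
        have happ : ∀ x, (y + t • v) x = y x + t * v x := fun x => by simp
        have hvx : ∀ x, v x = (if x = b then (1:ℝ) else 0) - (if x = a then 1 else 0) := by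
          intro x; simp [hvdef, Pi.single_apply]
        have hv0 : ∑ x, v x = 0 := by
          simp [hvx, Finset.sum_sub_distrib]
        refine ⟨fun x => ?_, ?_⟩
        · rw [happ, hvx]
          rcases eq_or_ne x a with rfl | hxa
          · rw [if_neg hab, if_pos rfl]
            linarith [ht.2]
          rcases eq_or_ne x b with rfl | hxb
          · rw [if_pos rfl, if_neg hxa]
            linarith [hy.1 x, ht.1.le]
          · rw [if_neg hxb, if_neg hxa]
            simpa using hy.1 x
        · simp only [happ]
          rw [Finset.sum_add_distrib, ← Finset.mul_sum, hv0, hy.2]; ring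
      have hlocmin : IsLocalMinOn Φ (FlowSet A) y :=
        eventually_nhdsWithin_of_forall fun x hx => hmin x hx
      have := hlocmin.hasFDerivWithinAt_nonneg
        ((hdiff y).hasFDerivAt.hasFDerivWithinAt) hcone
      have hval : fderiv ℝ Φ y v = c b y - c a y := by
        have : fderiv ℝ Φ y v
            = fderiv ℝ Φ y (Pi.single b 1) - fderiv ℝ Φ y (Pi.single a 1) := by
          rw [hvdef, map_sub]
        rw [this, hpot y hy a, hpot y hy b]
      rw [hval] at this
      linarith
    exact mul_le_mul_of_nonneg_left hcab (hy.1 a)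
end

section
/- Let Γ = (A, c) be an anonymous nonatomic game admitting a potential Φ that is convex on 𝓕. Then a Borel probability measure μ on 𝓕 is a coarse correlated Wardrop equilibrium of Γ if and only if μ gives probability 1 to the set of Wardrop equilibria of Γ. Consequently, the set of coarse correlated Wardrop equilibria, the set of correlated Wardrop equilibria, and the set of probability measures supported on the Wardrop equilibria all coincide. -/
open MeasureTheory
open Set Filter Topology

/-- Gradient inequality for convex differentiable functions. -/
lemma fderiv_sub_le_of_convexOn {E : Type*} [NormedAddCommGroup E] [NormedSpace ℝ E]
    {s : Set E} {f : E → ℝ} (hf : ConvexOn ℝ s f) (hd : Differentiable ℝ f)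
    {x z : E} (hx : x ∈ s) (hz : z ∈ s) : fderiv ℝ f x (z - x) ≤ f z - f x := by
  set d := z - x with hd'
  have h2 : HasDerivAt (fun t : ℝ => x + t • d) d 0 := by
    simpa using ((hasDerivAt_id (0:ℝ)).smul_const d).const_add x
  have hg : HasDerivAt (fun t : ℝ => f (x + t • d)) (fderiv ℝ f x d) 0 := by
    have h1 : HasFDerivAt f (fderiv ℝ f x) (x + (0:ℝ) • d) := by
      simpa using (hd (x + (0:ℝ) • d)).hasFDerivAt
    exact h1.comp_hasDerivAt 0 h2
  have ht : Tendsto (slope (fun t : ℝ => f (x + t • d)) 0) (𝓝[>] (0:ℝ))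
      (𝓝 (fderiv ℝ f x d)) :=
    (hasDerivAt_iff_tendsto_slope.mp hg).mono_left
      (nhdsWithin_mono _ (fun t ht => ne_of_gt ht))
  refine le_of_tendsto ht ?_
  filter_upwards [Ioo_mem_nhdsGT_of_mem (by norm_num : (0:ℝ) ∈ Ico 0 1)] with t ht
  have h0 : (0:ℝ) < t := ht.1
  have hxt : x + t • d = (1 - t) • x + t • z := by
    rw [hd']; module
  have hcv : f (x + t • d) ≤ (1 - t) * f x + t * f z := by
    rw [hxt]
    exact hf.2 hx hz (by linarith [ht.2]) h0.le (by ring)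
  have hs : slope (fun t : ℝ => f (x + t • d)) 0 t
      = (f (x + t • d) - f x) / t := by
    simp [slope_def_field, div_eq_inv_mul]
  rw [hs, div_le_iff₀ h0]
  nlinarith [hcv]

/-- First-order optimality for a minimum over a convex set. -/
lemma fderiv_nonneg_of_isMinOn {E : Type*} [NormedAddCommGroup E] [NormedSpace ℝ E]
    {s : Set E} {f : E → ℝ} (hs : Convex ℝ s) (hd : Differentiable ℝ f)
    {x z : E} (hmin : IsMinOn f s x) (hx : x ∈ s) (hz : z ∈ s) :
    0 ≤ fderiv ℝ f x (z - x) := by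
  have hloc : IsLocalMinOn f s x := hmin.filter_mono inf_le_right
  exact hloc.hasFDerivWithinAt_nonneg ((hd x).hasFDerivAt.hasFDerivWithinAt)
    (sub_mem_posTangentConeAt_of_segment_subset (hs.segment_subset hx hz))


/-- In an anonymous nonatomic game `(A, c)` with a convex potential `Φ`,
a Borel probability measure `μ` on the flow simplex is a coarse correlated Wardrop
equilibrium iff it gives probability one to the set of Wardrop equilibria; likewise a
measure is a correlated Wardrop equilibrium iff it gives probability one to the set of
Wardrop equilibria.  Hence CCWE, CWE and distributions over WE coincide. -/
theorem stmt3 {A : Type*} [Fintype A] [Nonempty A] [DecidableEq A]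
    (c : A → (A → ℝ) → ℝ) (hc : ∀ a, ContinuousOn (c a) (FlowSet A))
    (Φ : (A → ℝ) → ℝ) (hdiff : Differentiable ℝ Φ)
    (hpot : ∀ y ∈ FlowSet A, ∀ a : A, fderiv ℝ Φ y (Pi.single a 1) = c a y)
    (hconv : ConvexOn ℝ (FlowSet A) Φ)
    (μ : Measure ↥(FlowSet A)) [IsProbabilityMeasure μ] :
    -- CCWE ↔ supported on Wardrop equilibria
    ((∀ b : A,
        ∫ y : ↥(FlowSet A), ∑ a, (y : A → ℝ) a * c a y ∂μ ≤
        ∫ y : ↥(FlowSet A), c b y ∂μ) ↔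
      μ {y : ↥(FlowSet A) | ∀ a b : A, (y : A → ℝ) a * c a y ≤ (y : A → ℝ) a * c b y} = 1)
    ∧
    -- CWE ↔ supported on Wardrop equilibria
    ((∀ a b : A,
        ∫ y : ↥(FlowSet A), (y : A → ℝ) a * c a y ∂μ ≤
        ∫ y : ↥(FlowSet A), (y : A → ℝ) a * c b y ∂μ) ↔
      μ {y : ↥(FlowSet A) | ∀ a b : A, (y : A → ℝ) a * c a y ≤ (y : A → ℝ) a * c b y} = 1) := by
  
  classical
  have hFS : FlowSet A = stdSimplex ℝ A := rfl
  have hcomp : IsCompact (FlowSet A) := hFS ▸ isCompact_stdSimplex ℝ A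
  have hconvset : Convex ℝ (FlowSet A) := hFS ▸ convex_stdSimplex ℝ A
  haveI : CompactSpace ↥(FlowSet A) := isCompact_iff_compactSpace.mp hcomp
  -- continuity facts
  have hc' : ∀ a, Continuous fun y : ↥(FlowSet A) => c a ↑y := fun a => (hc a).restrict
  have hcoord : ∀ a, Continuous fun y : ↥(FlowSet A) => (y : A → ℝ) a := fun a =>
    (continuous_apply a).comp continuous_subtype_val
  have hSCc : Continuous fun y : ↥(FlowSet A) => ∑ a, (y : A → ℝ) a * c a ↑y :=
    continuous_finset_sum _ fun a _ => (hcoord a).mul (hc' a)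
  have hΦc : Continuous fun y : ↥(FlowSet A) => Φ ↑y :=
    hdiff.continuous.comp continuous_subtype_val
  -- integrability helper
  have hInt : ∀ g : ↥(FlowSet A) → ℝ, Continuous g → Integrable g μ := fun g hg =>
    hg.integrable_of_hasCompactSupport (HasCompactSupport.of_compactSpace g)
  -- the Wardrop set
  set S : Set ↥(FlowSet A) :=
    {y : ↥(FlowSet A) | ∀ a b : A, (y : A → ℝ) a * c a y ≤ (y : A → ℝ) a * c b y} with hSdef
  have hSm : MeasurableSet S := by
    have : S = ⋂ a, ⋂ b, {y : ↥(FlowSet A) | (y : A → ℝ) a * c a ↑y ≤ (y : A → ℝ) a * c b ↑y} := by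
      ext y; simp [hSdef]
    rw [this]
    exact MeasurableSet.iInter fun a => MeasurableSet.iInter fun b =>
      measurableSet_le ((hcoord a).mul (hc' a)).measurable ((hcoord a).mul (hc' b)).measurable
  -- derivative formula
  have hL2 : ∀ y ∈ FlowSet A, ∀ z : A → ℝ, fderiv ℝ Φ y z = ∑ a, z a * c a y := by
    intro y hy z
    have hz : z = ∑ a, z a • (Pi.single a 1 : A → ℝ) := by
      funext j
      simp [Pi.single_apply, Finset.sum_ite_eq']
    calc fderiv ℝ Φ y z = fderiv ℝ Φ y (∑ a, z a • (Pi.single a 1 : A → ℝ)) := by rw [← hz]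
      _ = ∑ a, z a * c a y := by
          rw [map_sum]
          exact Finset.sum_congr rfl fun a _ => by
            rw [_root_.map_smul, hpot y hy a, smul_eq_mul]
  -- ae membership from measure one
  have hA : μ S = 1 → (∀ᵐ y ∂μ, y ∈ S) := by
    intro h
    have : μ Sᶜ = 0 := (prob_compl_eq_zero_iff hSm).mpr h
    rw [ae_iff]
    simpa [compl_def] using this
  -- supported ⇒ CWE
  have hCWEofae : (∀ᵐ y ∂μ, y ∈ S) → ∀ a b : A,
      ∫ y : ↥(FlowSet A), (y : A → ℝ) a * c a y ∂μ ≤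
      ∫ y : ↥(FlowSet A), (y : A → ℝ) a * c b y ∂μ := by
    intro hae a b
    refine integral_mono_ae (hInt _ ((hcoord a).mul (hc' a))) (hInt _ ((hcoord a).mul (hc' b))) ?_
    filter_upwards [hae] with y hy using hy a b
  -- supported ⇒ CCWE
  have hCCWEofae : (∀ᵐ y ∂μ, y ∈ S) → ∀ b : A,
      ∫ y : ↥(FlowSet A), ∑ a, (y : A → ℝ) a * c a y ∂μ ≤
      ∫ y : ↥(FlowSet A), c b y ∂μ := by
    intro hae b
    refine integral_mono_ae (hInt _ hSCc) (hInt _ (hc' b)) ?_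
    filter_upwards [hae] with y hy
    calc ∑ a, (y : A → ℝ) a * c a ↑y ≤ ∑ a, (y : A → ℝ) a * c b ↑y :=
          Finset.sum_le_sum fun a _ => hy a b
      _ = c b ↑y := by rw [← Finset.sum_mul, y.2.2, one_mul]
  -- CWE ⇒ CCWE
  have hCC_of_CWE : (∀ a b : A,
      ∫ y : ↥(FlowSet A), (y : A → ℝ) a * c a y ∂μ ≤
      ∫ y : ↥(FlowSet A), (y : A → ℝ) a * c b y ∂μ) → ∀ b : A,
      ∫ y : ↥(FlowSet A), ∑ a, (y : A → ℝ) a * c a y ∂μ ≤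
      ∫ y : ↥(FlowSet A), c b y ∂μ := by
    intro hcwe b
    have h1 : ∫ y : ↥(FlowSet A), ∑ a, (y : A → ℝ) a * c a y ∂μ
        = ∑ a, ∫ y : ↥(FlowSet A), (y : A → ℝ) a * c a y ∂μ :=
      integral_finset_sum _ fun a _ => hInt _ ((hcoord a).mul (hc' a))
    have h2 : ∫ y : ↥(FlowSet A), c b y ∂μ
        = ∑ a, ∫ y : ↥(FlowSet A), (y : A → ℝ) a * c b y ∂μ := by
      rw [← integral_finset_sum _ fun a _ => hInt (fun y : ↥(FlowSet A) => (y : A → ℝ) a * c b ↑y) ((hcoord a).mul (hc' b))]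
      refine integral_congr_ae (Eventually.of_forall fun y => ?_)
      show c b ↑y = ∑ a, (y : A → ℝ) a * c b ↑y
      rw [← Finset.sum_mul, y.2.2, one_mul]
    rw [h1, h2]
    exact Finset.sum_le_sum fun a _ => hcwe a b
  -- CCWE ⇒ supported
  have hB : (∀ b : A,
      ∫ y : ↥(FlowSet A), ∑ a, (y : A → ℝ) a * c a y ∂μ ≤
      ∫ y : ↥(FlowSet A), c b y ∂μ) → μ S = 1 := by
    intro hccwe
    obtain ⟨z, hzmem, hzmin⟩ := hcomp.exists_isMinOn
      ⟨_, hFS ▸ single_mem_stdSimplex ℝ (Classical.arbitrary A)⟩ hdiff.continuous.continuousOn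
    -- pointwise inequality from convexity
    have hpt : ∀ y : ↥(FlowSet A),
        Φ ↑y - Φ z ≤ (∑ a, (y : A → ℝ) a * c a ↑y) - ∑ b, z b * c b ↑y := by
      intro y
      have h1 := fderiv_sub_le_of_convexOn hconv hdiff y.2 hzmem
      rw [map_sub, hL2 ↑y y.2 z, hL2 ↑y y.2 ↑y] at h1
      linarith
    have hintzc : Integrable (fun y : ↥(FlowSet A) => ∑ b, z b * c b ↑y) μ :=
      hInt _ (continuous_finset_sum _ fun b _ => continuous_const.mul (hc' b))
    -- ∫ Φ - Φ z ≤ 0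
    have hI1 : ∫ y : ↥(FlowSet A), (Φ ↑y - Φ z) ∂μ
        ≤ ∫ y : ↥(FlowSet A), ((∑ a, (y : A → ℝ) a * c a ↑y) - ∑ b, z b * c b ↑y) ∂μ :=
      integral_mono (hInt _ (hΦc.sub continuous_const))
        (hInt _ (hSCc.sub (continuous_finset_sum _ fun b _ => continuous_const.mul (hc' b)))) hpt
    have hI2 : ∫ y : ↥(FlowSet A), ((∑ a, (y : A → ℝ) a * c a ↑y) - ∑ b, z b * c b ↑y) ∂μ ≤ 0 := by
      rw [integral_sub (hInt _ hSCc) hintzc]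
      have hsum : ∫ y : ↥(FlowSet A), ∑ b, z b * c b ↑y ∂μ
          = ∑ b, z b * ∫ y : ↥(FlowSet A), c b ↑y ∂μ := by
        rw [integral_finset_sum _ fun b _ => (hInt _ (hc' b)).const_mul (z b)]
        exact Finset.sum_congr rfl fun b _ => integral_const_mul _ _
      rw [hsum]
      have hge : ∫ y : ↥(FlowSet A), ∑ a, (y : A → ℝ) a * c a ↑y ∂μ
          ≤ ∑ b, z b * ∫ y : ↥(FlowSet A), c b ↑y ∂μ := by
        calc ∫ y : ↥(FlowSet A), ∑ a, (y : A → ℝ) a * c a ↑y ∂μ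
            = ∑ b, z b * ∫ y : ↥(FlowSet A), ∑ a, (y : A → ℝ) a * c a ↑y ∂μ := by
              rw [← Finset.sum_mul, hzmem.2, one_mul]
          _ ≤ ∑ b, z b * ∫ y : ↥(FlowSet A), c b ↑y ∂μ :=
              Finset.sum_le_sum fun b _ => mul_le_mul_of_nonneg_left (hccwe b) (hzmem.1 b)
      linarith
    have hnn : ∀ y : ↥(FlowSet A), 0 ≤ Φ ↑y - Φ z := fun y => sub_nonneg.2 (hzmin y.2)
    have hzero : ∫ y : ↥(FlowSet A), (Φ ↑y - Φ z) ∂μ = 0 :=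
      le_antisymm (le_trans hI1 hI2) (integral_nonneg hnn)
    have hae0 : (fun y : ↥(FlowSet A) => Φ ↑y - Φ z) =ᵐ[μ] 0 :=
      (integral_eq_zero_iff_of_nonneg hnn (hInt _ (hΦc.sub continuous_const))).mp hzero
    have hae : ∀ᵐ y ∂μ, y ∈ S := by
      filter_upwards [hae0] with y hy
      have hyΦ : Φ ↑y = Φ z := by
        have : Φ ↑y - Φ z = 0 := hy
        linarith
      have hymin : IsMinOn Φ (FlowSet A) ↑y := by
        intro w hw
        have := hzmin hw
        simp only [mem_setOf_eq, mem_lowerBounds] at this ⊢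
        calc Φ ↑y = Φ z := hyΦ
          _ ≤ Φ w := hzmin hw
      have hSCle : ∀ b, (∑ a, (y : A → ℝ) a * c a ↑y) ≤ c b ↑y := by
        intro b
        have h0 := fderiv_nonneg_of_isMinOn hconvset hdiff hymin y.2
          (hFS ▸ single_mem_stdSimplex ℝ b)
        rw [map_sub, hL2 ↑y y.2 _, hL2 ↑y y.2 ↑y] at h0
        have hsingle : ∑ a, (Pi.single b 1 : A → ℝ) a * c a ↑y = c b ↑y := by
          rw [Finset.sum_eq_single b]
          · simp
          · intro a _ hab; simp [Pi.single_apply, hab]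
          · intro h; exact absurd (Finset.mem_univ b) h
        linarith
      intro a b
      by_cases ha : (y : A → ℝ) a = 0
      · simp [ha]
      have hya : 0 < (y : A → ℝ) a := lt_of_le_of_ne (y.2.1 a) (Ne.symm ha)
      have hsum0 : ∑ a', (y : A → ℝ) a' * (c a' ↑y - ∑ a'', (y : A → ℝ) a'' * c a'' ↑y) = 0 := by
        have hexp : ∀ a' : A, (y : A → ℝ) a' * (c a' ↑y - ∑ a'', (y : A → ℝ) a'' * c a'' ↑y)
            = (y : A → ℝ) a' * c a' ↑y
              - (y : A → ℝ) a' * ∑ a'', (y : A → ℝ) a'' * c a'' ↑y := fun a' => by ring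
        simp only [hexp]
        rw [Finset.sum_sub_distrib, ← Finset.sum_mul, y.2.2, one_mul, sub_self]
      have hterm : ∀ a' ∈ Finset.univ, (0:ℝ) ≤ (y : A → ℝ) a' *
          (c a' ↑y - ∑ a'', (y : A → ℝ) a'' * c a'' ↑y) := fun a' _ =>
        mul_nonneg (y.2.1 a') (sub_nonneg.2 (hSCle a'))
      have hz0 := (Finset.sum_eq_zero_iff_of_nonneg hterm).mp hsum0 a (Finset.mem_univ a)
      have hca : c a ↑y = ∑ a'', (y : A → ℝ) a'' * c a'' ↑y := by
        rcases mul_eq_zero.mp hz0 with h | h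
        · exact absurd h ha
        · linarith
      calc (y : A → ℝ) a * c a ↑y
          = (y : A → ℝ) a * ∑ a'', (y : A → ℝ) a'' * c a'' ↑y := by rw [hca]
        _ ≤ (y : A → ℝ) a * c b ↑y := mul_le_mul_of_nonneg_left (hSCle b) (y.2.1 a)
    rw [← prob_compl_eq_zero_iff hSm]
    rw [ae_iff] at hae
    simpa [compl_def] using hae
  exact ⟨⟨hB, fun h => hCCWEofae (hA h)⟩,
    ⟨fun hcwe => hB (hCC_of_CWE hcwe), fun h => hCWEofae (hA h)⟩⟩
end

section
/- Let Γ = (A, Θ, p, c) be an anonymous nonatomic game with incomplete information with exactly two actions, A = {a, b}, such that for every action a ∈ A and every state θ ∈ Θ the function y ↦ y_a·c_a(y,θ) is convex on 𝓕 and the function y ↦ c_a(y,θ) is concave on 𝓕. Then for every Bayes correlated Wardrop equilibrium μ of Γ there exists a simple Bayes correlated Wardrop equilibrium ȳ : Θ → 𝓕 such that for every state θ ∈ Θ, Σ_{a∈A} ȳ_a(θ)·c_a(ȳ(θ),θ) ≤ ∫ Σ_{a∈A} y_a·c_a(y,θ) dμ(y|θ); in particular its expected social cost is weakly smaller than that of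 μ. -/
open MeasureTheory

/-- Transfer concavity along a pointwise equality on the set. -/
lemma concaveOn_congr' {A : Type*} [Fintype A] {s : Set (A → ℝ)} {f g : (A → ℝ) → ℝ}
    (hf : ConcaveOn ℝ s f) (h : ∀ x ∈ s, f x = g x) : ConcaveOn ℝ s g := by
  refine ⟨hf.1, fun x hx y hy a b ha hb hab => ?_⟩
  rw [← h x hx, ← h y hy, ← h _ (hf.1 hx hy ha hb hab)]
  exact hf.2 hx hy ha hb hab

/-- In an ANGII with exactly two actions, if for every action `a` and
state `θ` the map `y ↦ y a * c a y θ` is convex on the flow simplex and `y ↦ c a y θ`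
is concave on it, then for every Bayes correlated Wardrop equilibrium `μ` there is a
simple Bayes correlated Wardrop equilibrium whose (conditional) social cost in each
state is weakly smaller than that of `μ`. -/
theorem stmt5 {A Θ : Type*} [Fintype A] (hcard : Fintype.card A = 2)
    [Fintype Θ] [Nonempty Θ]
    (p : Θ → ℝ) (hp : ∀ θ, 0 < p θ) (hp1 : ∑ θ, p θ = 1)
    (c : A → (A → ℝ) → Θ → ℝ)
    (hc : ∀ a θ, ContinuousOn (fun y => c a y θ) (FlowSet A))
    (hconv : ∀ (a : A) (θ : Θ), ConvexOn ℝ (FlowSet A) (fun y => y a * c a y θ))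
    (hconc : ∀ (a : A) (θ : Θ), ConcaveOn ℝ (FlowSet A) (fun y => c a y θ))
    (μ : Θ → Measure ↥(FlowSet A)) (hprob : ∀ θ, IsProbabilityMeasure (μ θ))
    (hBCWE : ∀ a b : A,
      ∑ θ, p θ * ∫ y : ↥(FlowSet A), (y : A → ℝ) a * c a (y : A → ℝ) θ ∂(μ θ) ≤
      ∑ θ, p θ * ∫ y : ↥(FlowSet A), (y : A → ℝ) a * c b (y : A → ℝ) θ ∂(μ θ)) :
    ∃ ybar : Θ → (A → ℝ),
      (∀ θ, ybar θ ∈ FlowSet A) ∧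
      -- `ybar` is a simple Bayes correlated Wardrop equilibrium
      (∀ a b : A,
        ∑ θ, p θ * (ybar θ a * c a (ybar θ) θ) ≤
        ∑ θ, p θ * (ybar θ a * c b (ybar θ) θ)) ∧
      -- in each state its social cost is weakly smaller
      (∀ θ, ∑ a, ybar θ a * c a (ybar θ) θ ≤
        ∫ y : ↥(FlowSet A), ∑ a, (y : A → ℝ) a * c a (y : A → ℝ) θ ∂(μ θ)) := by
  classical
  haveI := hprob
  have hS : FlowSet A = stdSimplex ℝ A := rfl
  have hSconv : Convex ℝ (FlowSet A) := hS ▸ convex_stdSimplex ℝ A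
  have hSclosed : IsClosed (FlowSet A) := hS ▸ isClosed_stdSimplex ℝ A
  haveI : CompactSpace ↥(FlowSet A) :=
    isCompact_iff_compactSpace.mp (hS ▸ isCompact_stdSimplex (𝕜 := ℝ) (ι := A))
  -- integrability of continuous-on-the-simplex functions
  have hint : ∀ (g : (A → ℝ) → ℝ) (θ : Θ), ContinuousOn g (FlowSet A) →
      Integrable (fun y : ↥(FlowSet A) => g ↑y) (μ θ) := by
    intro g θ hg
    exact hg.restrict.integrable_of_hasCompactSupport (isClosed_tsupport _).isCompact
  have hintval : ∀ θ, Integrable (fun y : ↥(FlowSet A) => (y : A → ℝ)) (μ θ) := fun θ =>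
    continuous_subtype_val.integrable_of_hasCompactSupport (isClosed_tsupport _).isCompact
  -- the barycenter
  set ybar : Θ → (A → ℝ) := fun θ => ∫ y : ↥(FlowSet A), (y : A → ℝ) ∂(μ θ) with hybar
  have hmem : ∀ θ, ybar θ ∈ FlowSet A := fun θ =>
    hSconv.integral_mem hSclosed (Filter.Eventually.of_forall fun y => y.2) (hintval θ)
  -- continuity of the weighted cost maps
  have hcont : ∀ (a b : A) (θ : Θ), ContinuousOn (fun y : A → ℝ => y a * c b y θ) (FlowSet A) :=
    fun a b θ => (continuous_apply a).continuousOn.mul (hc b θ)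
  -- Jensen for the convex maps `y ↦ y a * c a y θ`
  have hJconv : ∀ (a : A) (θ : Θ),
      ybar θ a * c a (ybar θ) θ ≤ ∫ y : ↥(FlowSet A), (y : A → ℝ) a * c a ↑y θ ∂(μ θ) := by
    intro a θ
    exact (hconv a θ).map_integral_le (hcont a a θ) hSclosed
      (Filter.Eventually.of_forall fun y => y.2) (hintval θ) (hint _ θ (hcont a a θ))
  -- for `a ≠ b`, the map `y ↦ y a * c b y θ` is concave on the simplex
  have hconc' : ∀ (a b : A), a ≠ b → ∀ θ : Θ,
      ConcaveOn ℝ (FlowSet A) (fun y : A → ℝ => y a * c b y θ) := by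
    intro a b hab θ
    have huniv : (Finset.univ : Finset A) = {a, b} := by
      symm
      apply Finset.eq_univ_of_card
      rw [Finset.card_insert_of_notMem (by simp [hab]), Finset.card_singleton, hcard]
    have hya : ∀ y ∈ FlowSet A, y a = 1 - y b := by
      intro y hy
      have h1 := hy.2
      rw [huniv, Finset.sum_insert (by simp [hab]), Finset.sum_singleton] at h1
      linarith
    have h1 : ConcaveOn ℝ (FlowSet A)
        ((fun y : A → ℝ => c b y θ) + -(fun y : A → ℝ => y b * c b y θ)) :=
      (hconc b θ).add (hconv b θ).neg
    refine concaveOn_congr' h1 fun x hx => ?_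
    have := hya x hx
    simp only [Pi.add_apply, Pi.neg_apply]
    rw [this]
    ring
  -- Jensen for the concave maps
  have hJconc : ∀ (a b : A), a ≠ b → ∀ θ : Θ,
      (∫ y : ↥(FlowSet A), (y : A → ℝ) a * c b ↑y θ ∂(μ θ)) ≤ ybar θ a * c b (ybar θ) θ := by
    intro a b hab θ
    exact (hconc' a b hab θ).le_map_integral (hcont a b θ) hSclosed
      (Filter.Eventually.of_forall fun y => y.2) (hintval θ) (hint _ θ (hcont a b θ))
  refine ⟨ybar, hmem, ?_, ?_⟩
  · intro a b
    by_cases hab : a = b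
    · subst hab; exact le_refl _
    calc ∑ θ, p θ * (ybar θ a * c a (ybar θ) θ)
        ≤ ∑ θ, p θ * ∫ y : ↥(FlowSet A), (y : A → ℝ) a * c a ↑y θ ∂(μ θ) :=
          Finset.sum_le_sum fun θ _ => mul_le_mul_of_nonneg_left (hJconv a θ) (hp θ).le
      _ ≤ ∑ θ, p θ * ∫ y : ↥(FlowSet A), (y : A → ℝ) a * c b ↑y θ ∂(μ θ) := hBCWE a b
      _ ≤ ∑ θ, p θ * (ybar θ a * c b (ybar θ) θ) :=
          Finset.sum_le_sum fun θ _ => mul_le_mul_of_nonneg_left (hJconc a b hab θ) (hp θ).le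
  · intro θ
    have h1 : ∑ a, ybar θ a * c a (ybar θ) θ ≤
        ∑ a, ∫ y : ↥(FlowSet A), (y : A → ℝ) a * c a ↑y θ ∂(μ θ) :=
      Finset.sum_le_sum fun a _ => hJconv a θ
    have h2 : ∑ a, ∫ y : ↥(FlowSet A), (y : A → ℝ) a * c a ↑y θ ∂(μ θ) =
        ∫ y : ↥(FlowSet A), ∑ a, (y : A → ℝ) a * c a ↑y θ ∂(μ θ) :=
      (integral_finset_sum _ fun a _ => hint _ θ (hcont a a θ)).symm
    linarith
end

section
/- Let Γ = (A, Θ, p, c) be an anonymous nonatomic game with incomplete information and let μ be a Bayes correlated Wardrop equilibrium of Γ. Then there exist a sequence ε_n ≥ 0 with ε_n → 0 and, for each n, an information structure (γ_n, T_n, π_n) and an ε_n-Bayes Wardrop equilibrium of Γ with that information structure whose induced outcome μ_n satisfies: for every θ ∈ Θ, μ_n(·|θ) converges weak* to μ(·|θ). -/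
open MeasureTheory Filter

set_option linter.unusedSectionVars false

namespace Stmt8Aux

variable {A : Type*} [Fintype A] [DecidableEq A] [Nonempty A]

def cnt (M : ℕ) (v : Fin M → A) (a : A) : ℕ := (Finset.univ.filter fun l => v l = a).card

variable (A) in
noncomputable def act0 : A := Classical.arbitrary A

/-- rounded counts of a flow -/
noncomputable def rc (M : ℕ) (y : ↥(FlowSet A)) : A → ℕ := fun a =>
  if a = act0 A then M - ∑ a' ∈ Finset.univ.erase (act0 A), ⌊(M : ℝ) * y.1 a'⌋₊
  else ⌊(M : ℝ) * y.1 a⌋₊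

lemma sum_erase_le_one (y : ↥(FlowSet A)) (s : Finset A) :
    ∑ a' ∈ s, y.1 a' ≤ 1 := by
  rw [← y.2.2]
  exact Finset.sum_le_sum_of_subset_of_nonneg (Finset.subset_univ _) (fun a _ _ => y.2.1 a)

lemma rc_partial_le (M : ℕ) (y : ↥(FlowSet A)) :
    ∑ a' ∈ Finset.univ.erase (act0 A), ⌊(M : ℝ) * y.1 a'⌋₊ ≤ M := by
  have h1 : (↑(∑ a' ∈ Finset.univ.erase (act0 A), ⌊(M : ℝ) * y.1 a'⌋₊) : ℝ) ≤ (M : ℝ) := by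
    push_cast
    have step1 : ∑ a' ∈ Finset.univ.erase (act0 A), ((⌊(M : ℝ) * y.1 a'⌋₊ : ℝ))
        ≤ ∑ a' ∈ Finset.univ.erase (act0 A), (M : ℝ) * y.1 a' :=
      Finset.sum_le_sum fun a' _ => Nat.floor_le (mul_nonneg (Nat.cast_nonneg M) (y.2.1 a'))
    refine step1.trans ?_
    rw [← Finset.mul_sum]
    calc (M : ℝ) * ∑ a' ∈ Finset.univ.erase (act0 A), y.1 a'
        ≤ (M : ℝ) * 1 := mul_le_mul_of_nonneg_left (sum_erase_le_one y _) (Nat.cast_nonneg M)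
      _ = M := mul_one _
  exact_mod_cast h1

lemma rc_sum (M : ℕ) (y : ↥(FlowSet A)) : ∑ a, rc M y a = M := by
  rw [← Finset.add_sum_erase _ _ (Finset.mem_univ (act0 A))]
  have h2 : ∑ a ∈ Finset.univ.erase (act0 A), rc M y a
      = ∑ a' ∈ Finset.univ.erase (act0 A), ⌊(M : ℝ) * y.1 a'⌋₊ :=
    Finset.sum_congr rfl fun a ha => by
      rw [rc, if_neg (Finset.ne_of_mem_erase ha)]
  rw [h2, rc, if_pos rfl, Nat.sub_add_cancel (rc_partial_le M y)]

/-- coordinatewise approximation bound -/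
lemma rc_dist (M : ℕ) (hM : 0 < M) (y : ↥(FlowSet A)) (a : A) :
    |((rc M y a : ℝ)) / M - y.1 a| ≤ (Fintype.card A : ℝ) / M := by
  have hMR : (0 : ℝ) < M := Nat.cast_pos.mpr hM
  have hfl : ∀ a', |((⌊(M : ℝ) * y.1 a'⌋₊ : ℝ)) / M - y.1 a'| ≤ 1 / M := by
    intro a'
    have h0 : (0 : ℝ) ≤ (M : ℝ) * y.1 a' := mul_nonneg hMR.le (y.2.1 a')
    have h1 : ((⌊(M : ℝ) * y.1 a'⌋₊ : ℝ)) ≤ (M : ℝ) * y.1 a' := Nat.floor_le h0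
    have h2 : (M : ℝ) * y.1 a' - 1 < (⌊(M : ℝ) * y.1 a'⌋₊ : ℝ) := by
      have := Nat.lt_floor_add_one ((M : ℝ) * y.1 a')
      linarith
    have hnum : |((⌊(M : ℝ) * y.1 a'⌋₊ : ℝ)) - (M : ℝ) * y.1 a'| ≤ 1 :=
      abs_le.mpr ⟨by linarith, by linarith⟩
    have he : ((⌊(M : ℝ) * y.1 a'⌋₊ : ℝ)) / M - y.1 a'
        = (((⌊(M : ℝ) * y.1 a'⌋₊ : ℝ)) - (M : ℝ) * y.1 a') / M := by
      field_simp
    rw [he, abs_div, abs_of_pos hMR]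
    gcongr
  by_cases ha : a = act0 A
  · subst ha
    have hsub := rc_partial_le M y
    have hcast : ((rc M (y) (act0 A) : ℝ))
        = (M : ℝ) - ∑ a' ∈ Finset.univ.erase (act0 A), ((⌊(M : ℝ) * y.1 a'⌋₊ : ℝ)) := by
      rw [rc, if_pos rfl]
      push_cast [Nat.cast_sub hsub]
      ring
    have hy0 : y.1 (act0 A) = 1 - ∑ a' ∈ Finset.univ.erase (act0 A), y.1 a' := by
      have := y.2.2
      rw [← Finset.add_sum_erase _ _ (Finset.mem_univ (act0 A))] at this
      linarith
    have hkey : (rc M y (act0 A) : ℝ) / M - y.1 (act0 A)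
        = ∑ a' ∈ Finset.univ.erase (act0 A), (y.1 a' - ((⌊(M : ℝ) * y.1 a'⌋₊ : ℝ)) / M) := by
      have hMM : (M : ℝ) / M = 1 := div_self hMR.ne'
      rw [hcast, hy0, Finset.sum_sub_distrib, sub_div, ← Finset.sum_div, hMM]
      ring
    rw [hkey]
    calc |∑ a' ∈ Finset.univ.erase (act0 A), (y.1 a' - ((⌊(M : ℝ) * y.1 a'⌋₊ : ℝ)) / M)|
        ≤ ∑ a' ∈ Finset.univ.erase (act0 A), |y.1 a' - ((⌊(M : ℝ) * y.1 a'⌋₊ : ℝ)) / M| :=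
          Finset.abs_sum_le_sum_abs _ _
      _ ≤ ∑ _a' ∈ Finset.univ.erase (act0 A), (1:ℝ) / M := by
          refine Finset.sum_le_sum fun a' _ => ?_
          rw [abs_sub_comm]; exact hfl a'
      _ ≤ (Fintype.card A : ℝ) / M := by
          rw [Finset.sum_const, nsmul_eq_mul]
          have hcard : ((Finset.univ.erase (act0 A)).card : ℝ) ≤ (Fintype.card A : ℝ) := by
            exact_mod_cast Finset.card_le_card (Finset.subset_univ _)
          rw [mul_one_div, div_le_div_iff₀ hMR hMR]
          nlinarith
  · rw [rc, if_neg ha]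
    refine (hfl a).trans ?_
    gcongr
    exact_mod_cast Nat.one_le_iff_ne_zero.mpr Fintype.card_ne_zero


lemma exists_arr (M : ℕ) (m : A → ℕ) (h : ∑ a, m a = M) :
    ∃ v : Fin M → A, ∀ a, cnt M v a = m a := by
  have hcard : Fintype.card (Fin M) = Fintype.card (Σ a : A, Fin (m a)) := by
    simp [Fintype.card_sigma, h]
  obtain ⟨e⟩ : Nonempty ((Fin M) ≃ (Σ a : A, Fin (m a))) := ⟨Fintype.equivOfCardEq hcard⟩
  refine ⟨fun k => (e k).1, fun a => ?_⟩
  have h2 : (Finset.univ.filter fun s : (Σ a' : A, Fin (m a')) => s.1 = a)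
      = Finset.sigma {a} (fun _ => Finset.univ) := by
    ext s; simp [Finset.mem_sigma, eq_comm]
  have h3 : (Finset.univ.filter fun l : Fin M => (e l).1 = a).card
      = (Finset.univ.filter fun s : (Σ a' : A, Fin (m a')) => s.1 = a).card := by
    apply Finset.card_bij (fun l _ => e l)
    · intro l hl; simp at hl ⊢; exact hl
    · intro l1 _ l2 _ hE; exact e.injective hE
    · intro s hs; exact ⟨e.symm s, by simpa using hs, by simp⟩
  rw [cnt, h3, h2, Finset.card_sigma]
  simp

/-- an arrangement with given counts, or junk -/
noncomputable def arrD (M : ℕ) (m : A → ℕ) : Fin M → A :=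
  if h : ∑ a, m a = M then (exists_arr M m h).choose else fun _ => act0 A

lemma cnt_arrD (M : ℕ) (m : A → ℕ) (h : ∑ a, m a = M) (a : A) :
    cnt M (arrD M m) a = m a := by
  rw [arrD, dif_pos h]
  exact (exists_arr M m h).choose_spec a

/-- rounding of a flow to an arrangement -/
noncomputable def rv (M : ℕ) (y : ↥(FlowSet A)) : Fin M → A := arrD M (rc M y)

lemma cnt_rv (M : ℕ) (y : ↥(FlowSet A)) (a : A) : cnt M (rv M y) a = rc M y a :=
  cnt_arrD M _ (rc_sum M y) a

lemma measurable_rc (M : ℕ) : Measurable (rc M : ↥(FlowSet A) → (A → ℕ)) := by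
  apply measurable_pi_lambda
  intro a
  have hfl : ∀ a' : A, Measurable fun y : ↥(FlowSet A) => ⌊(M : ℝ) * y.1 a'⌋₊ :=
    fun a' => Nat.measurable_floor.comp
      ((continuous_const.mul ((continuous_apply a').comp continuous_subtype_val)).measurable)
  by_cases h : a = act0 A
  · subst h
    simp only [rc, if_pos rfl]
    exact Measurable.sub measurable_const (Finset.measurable_sum _ fun a' _ => hfl a')
  · simp only [rc, if_neg h]
    exact hfl a

lemma measurableSet_rv_fiber (M : ℕ) (v : Fin M → A) :
    MeasurableSet {y : ↥(FlowSet A) | rv M y = v} := by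
  have : {y : ↥(FlowSet A) | rv M y = v} = rc M ⁻¹' (arrD M ⁻¹' {v}) := rfl
  rw [this]
  exact measurable_rc M (Set.to_countable _).measurableSet

/-- empirical flow of an arrangement -/
noncomputable def emp (M : ℕ) (v : Fin M → A) : A → ℝ :=
  fun b => ∑ l, if v l = b then (M : ℝ)⁻¹ else 0

lemma emp_eq_cnt (M : ℕ) (v : Fin M → A) (b : A) : emp M v b = (cnt M v b : ℝ) / M := by
  unfold emp cnt
  rw [Finset.sum_ite, Finset.sum_const, Finset.sum_const_zero, add_zero,
    nsmul_eq_mul, div_eq_mul_inv]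

lemma emp_nonneg (M : ℕ) (v : Fin M → A) (b : A) : 0 ≤ emp M v b := by
  rw [emp_eq_cnt]; positivity

lemma emp_sum (M : ℕ) (hM : 0 < M) (v : Fin M → A) : ∑ b, emp M v b = 1 := by
  unfold emp
  rw [Finset.sum_comm]
  have h : ∀ l : Fin M, ∑ b, (if v l = b then (M : ℝ)⁻¹ else 0) = (M : ℝ)⁻¹ := fun l =>
    (Finset.sum_ite_eq _ (v l) _).trans (if_pos (Finset.mem_univ _))
  rw [Finset.sum_congr rfl fun l _ => h l, Finset.sum_const, Finset.card_univ, Fintype.card_fin,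
    nsmul_eq_mul, mul_inv_cancel₀ (Nat.cast_pos.mpr hM).ne']

lemma emp_mem (M : ℕ) (hM : 0 < M) (v : Fin M → A) : emp M v ∈ FlowSet A :=
  ⟨emp_nonneg M v, emp_sum M hM v⟩

/-- empirical flow as an element of the flow simplex -/
noncomputable def empF (M : ℕ) (hM : 0 < M) (v : Fin M → A) : ↥(FlowSet A) :=
  ⟨emp M v, emp_mem M hM v⟩


section Shift

variable (M : ℕ) [NeZero M]

/-- cyclic shift of an arrangement -/
def shf (j : Fin M) (v : Fin M → A) : Fin M → A := fun k => v (k + j)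

lemma cnt_shf (j : Fin M) (v : Fin M → A) (a : A) : cnt M (shf M j v) a = cnt M v a := by
  unfold cnt shf
  apply Finset.card_bij (fun l _ => l + j)
  · intro l hl; simp only [Finset.mem_filter, Finset.mem_univ, true_and] at hl ⊢; exact hl
  · intro l1 _ l2 _ h; exact add_right_cancel h
  · intro l hl
    simp only [Finset.mem_filter, Finset.mem_univ, true_and] at hl
    refine ⟨l - j, ?_, by rw [sub_add_cancel]⟩
    simp only [Finset.mem_filter, Finset.mem_univ, true_and, sub_add_cancel]
    exact hl

lemma emp_shf (j : Fin M) (v : Fin M → A) : emp M (shf M j v) = emp M v :=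
  funext fun b => by rw [emp_eq_cnt, emp_eq_cnt, cnt_shf]

/-- weight of a type profile under the uniform-cyclic-shift scheme -/
noncomputable def sw (v τ : Fin M → A) : ℝ :=
  (M : ℝ)⁻¹ * ∑ j, if τ = shf M j v then 1 else 0

lemma sw_nonneg (v τ : Fin M → A) : 0 ≤ sw M v τ := by
  unfold sw
  apply mul_nonneg (by positivity)
  exact Finset.sum_nonneg fun j _ => by split <;> norm_num

lemma sum_sw_mul (v : Fin M → A) (s : Finset (Fin M → A)) (g : (Fin M → A) → ℝ) :
    ∑ τ ∈ s, sw M v τ * g τ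
      = (M : ℝ)⁻¹ * ∑ j ∈ Finset.univ.filter (fun j => shf M j v ∈ s), g (shf M j v) := by
  unfold sw
  have h1 : ∀ τ ∈ s, ((M : ℝ)⁻¹ * ∑ j, if τ = shf M j v then (1:ℝ) else 0) * g τ
      = (M : ℝ)⁻¹ * ∑ j, (if τ = shf M j v then g τ else 0) := by
    intro τ _
    rw [mul_assoc, Finset.sum_mul]
    congr 1
    refine Finset.sum_congr rfl fun j _ => ?_
    split <;> simp
  rw [Finset.sum_congr rfl h1, ← Finset.mul_sum]
  congr 1
  rw [Finset.sum_comm, Finset.sum_filter]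
  refine Finset.sum_congr rfl fun j _ => ?_
  have h2 : ∀ τ ∈ s, (if τ = shf M j v then g τ else 0)
      = (if τ = shf M j v then g (shf M j v) else 0) := by
    intro τ _; split
    · next h => rw [h]
    · rfl
  rw [Finset.sum_congr rfl h2, Finset.sum_ite_eq' s (shf M j v) (fun _ => g (shf M j v))]

lemma sum_sw_mul_univ (v : Fin M → A) (g : (Fin M → A) → ℝ)
    (hg : ∀ j, g (shf M j v) = g v) : ∑ τ, sw M v τ * g τ = g v := by
  rw [sum_sw_mul]
  simp only [Finset.mem_univ, Finset.filter_true]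
  rw [Finset.sum_congr rfl (fun j _ => hg j), Finset.sum_const, Finset.card_univ,
    Fintype.card_fin, nsmul_eq_mul, ← mul_assoc,
    inv_mul_cancel₀ (Nat.cast_pos.mpr (Nat.pos_of_ne_zero (NeZero.ne M))).ne', one_mul]

lemma sum_sw_mul_filter (v : Fin M → A) (k : Fin M) (a : A) (g : (Fin M → A) → ℝ)
    (hg : ∀ j, g (shf M j v) = g v) :
    ∑ τ ∈ Finset.univ.filter (fun τ => τ k = a), sw M v τ * g τ = emp M v a * g v := by
  rw [sum_sw_mul]
  have hfe : Finset.univ.filter (fun j => shf M j v ∈ Finset.univ.filter (fun τ => τ k = a))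
      = Finset.univ.filter (fun j => v (k + j) = a) := by
    ext j; simp [shf]
  rw [hfe, Finset.sum_congr rfl (fun j _ => hg j), Finset.sum_const, nsmul_eq_mul]
  have hcard : (Finset.univ.filter (fun j => v (k + j) = a)).card = cnt M v a := by
    unfold cnt
    apply Finset.card_bij (fun j _ => k + j)
    · intro j hj; simp only [Finset.mem_filter, Finset.mem_univ, true_and] at hj ⊢; exact hj
    · intro j1 _ j2 _ h; exact add_left_cancel h
    · intro l hl
      simp only [Finset.mem_filter, Finset.mem_univ, true_and] at hl
      refine ⟨-k + l, ?_, by rw [← add_assoc, add_neg_cancel, zero_add]⟩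
      simp only [Finset.mem_filter, Finset.mem_univ, true_and, ← add_assoc, add_neg_cancel,
        zero_add]
      exact hl
  rw [hcard, emp_eq_cnt, div_eq_mul_inv]
  ring

end Shift


section Meas

/-- weight of arrangement `v` under the rounded measure -/
noncomputable def wgt (M : ℕ) (μθ : Measure ↥(FlowSet A)) (v : Fin M → A) : ℝ :=
  (μθ {y | rv M y = v}).toReal

lemma wgt_nonneg (M : ℕ) (μθ : Measure ↥(FlowSet A)) (v : Fin M → A) : 0 ≤ wgt M μθ v :=
  ENNReal.toReal_nonneg

lemma sum_wgt (M : ℕ) (μθ : Measure ↥(FlowSet A)) [IsProbabilityMeasure μθ] :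
    ∑ v, wgt M μθ v = 1 := by
  unfold wgt
  rw [← ENNReal.toReal_sum (fun v _ => measure_ne_top _ _)]
  have h : ∀ v : Fin M → A, {y : ↥(FlowSet A) | rv M y = v} = rv M ⁻¹' {v} := fun _ => rfl
  rw [Finset.sum_congr rfl fun v _ => by rw [h v]]
  rw [MeasureTheory.sum_measure_preimage_singleton _
    (fun v _ => measurableSet_rv_fiber M v)]
  simp [measure_univ]

lemma integral_comp_rv (M : ℕ) (μθ : Measure ↥(FlowSet A)) [IsFiniteMeasure μθ]
    (h : (Fin M → A) → ℝ) :
    ∫ y, h (rv M y) ∂μθ = ∑ v, wgt M μθ v * h v := by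
  have hrep : (fun y => h (rv M y))
      = fun y => ∑ v : Fin M → A, Set.indicator {y' : ↥(FlowSet A) | rv M y' = v}
          (fun _ => h v) y := by
    funext y
    rw [Finset.sum_eq_single (rv M y)]
    · rw [Set.indicator_of_mem (by exact rfl)]
    · intro v _ hv
      rw [Set.indicator_of_notMem]
      exact fun hy => hv (by exact hy.symm ▸ rfl)
    · intro hy; exact absurd (Finset.mem_univ _) hy
  rw [hrep, MeasureTheory.integral_finset_sum]
  · refine Finset.sum_congr rfl fun v _ => ?_
    rw [MeasureTheory.integral_indicator_const _ (measurableSet_rv_fiber M v)]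
    rw [smul_eq_mul, wgt]
    rfl
  · intro v _
    apply MeasureTheory.Integrable.indicator _ (measurableSet_rv_fiber M v)
    exact MeasureTheory.integrable_const _

end Meas


section Conv

lemma isCompact_flowSet : IsCompact (FlowSet A) := by
  rw [Metric.isCompact_iff_isClosed_bounded]
  constructor
  · have h1 : FlowSet A = (⋂ a, {y : A → ℝ | 0 ≤ y a}) ∩ {y | ∑ a, y a = 1} := by
      ext y; simp [FlowSet, Set.mem_iInter]
    rw [h1]
    exact (isClosed_iInter fun a => isClosed_le continuous_const (continuous_apply a)).inter
      (isClosed_eq (continuous_finset_sum _ fun a _ => continuous_apply a) continuous_const)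
  · apply Bornology.IsBounded.subset (Metric.isBounded_closedBall (x := (0 : A → ℝ)) (r := 1))
    intro y hy
    rw [Metric.mem_closedBall, dist_pi_le_iff zero_le_one]
    intro a
    rw [Real.dist_eq, Pi.zero_apply, sub_zero, abs_of_nonneg (hy.1 a)]
    calc y a ≤ ∑ a', y a' := Finset.single_le_sum (fun a' _ => hy.1 a') (Finset.mem_univ a)
    _ = 1 := hy.2

instance : CompactSpace ↥(FlowSet A) :=
  isCompact_iff_compactSpace.mp isCompact_flowSet

lemma tendsto_empF_rv (y : ↥(FlowSet A)) :
    Tendsto (fun n : ℕ => empF (n+1) (n.succ_pos) (rv (n+1) y)) atTop (nhds y) := by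
  rw [tendsto_subtype_rng]
  rw [tendsto_pi_nhds]
  intro a
  have he : ∀ n : ℕ, (empF (n+1) (n.succ_pos) (rv (n+1) y)).1 a
      = ((rc (n+1) y a : ℝ)) / (n+1) := by
    intro n
    show emp (n+1) (rv (n+1) y) a = _
    rw [emp_eq_cnt, cnt_rv]
    norm_num
  have hb : ∀ n : ℕ, |((rc (n+1) y a : ℝ)) / (n+1) - y.1 a| ≤ (Fintype.card A : ℝ) / (n+1) := by
    intro n
    have := rc_dist (n+1) (n.succ_pos) y a
    convert this using 3 <;> norm_num
  have hlim : Tendsto (fun n : ℕ => (Fintype.card A : ℝ) / (n+1)) atTop (nhds 0) := by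
    apply Tendsto.div_atTop (tendsto_const_nhds)
    have h1 : Tendsto (fun n : ℕ => ((n : ℝ))) atTop atTop := tendsto_natCast_atTop_atTop
    have h2 : Tendsto (fun n : ℕ => ((n : ℝ) + 1)) atTop atTop := h1.atTop_add tendsto_const_nhds
    exact h2
  have hsq : Tendsto (fun n : ℕ => ((rc (n+1) y a : ℝ)) / (n+1) - y.1 a) atTop (nhds 0) := by
    apply squeeze_zero_norm _ hlim
    intro n
    rw [Real.norm_eq_abs]
    exact hb n
  have := hsq.add_const (y.1 a)
  simp only [zero_add] at this
  simp only [he]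
  convert this using 2
  ring

lemma tendsto_integral_comp (μθ : Measure ↥(FlowSet A)) [IsProbabilityMeasure μθ]
    (h : ↥(FlowSet A) → ℝ) (hh : Continuous h) :
    Tendsto (fun n : ℕ => ∫ y, h (empF (n+1) (n.succ_pos) (rv (n+1) y)) ∂μθ) atTop
      (nhds (∫ y, h y ∂μθ)) := by
  set hbc : C(↥(FlowSet A), ℝ) := ⟨h, hh⟩ with hbc_def
  apply MeasureTheory.tendsto_integral_of_dominated_convergence (fun _ => ‖hbc‖)
  · intro n
    exact ((measurable_of_countable
      (fun mv : A → ℕ => h (empF (n+1) n.succ_pos (arrD (n+1) mv)))).comp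
      (measurable_rc (n+1))).aestronglyMeasurable
  · exact MeasureTheory.integrable_const _
  · intro n
    filter_upwards with y
    exact ContinuousMap.norm_coe_le_norm hbc _
  · filter_upwards with y
    exact (hh.tendsto y).comp (tendsto_empF_rv y)

end Conv


end Stmt8Aux


open Stmt8Aux

/-- Every Bayes correlated Wardrop equilibrium `μ` can be weak*
approximated by outcomes of `ε_n`-Bayes Wardrop equilibria (with `ε_n → 0`) for
suitable information structures. -/
theorem stmt8 {A Θ : Type*} [Fintype A] [Nonempty A] [Fintype Θ] [Nonempty Θ]
    (p : Θ → ℝ) (hp : ∀ θ, 0 < p θ) (hp1 : ∑ θ, p θ = 1)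
    (c : A → (A → ℝ) → Θ → ℝ)
    (hc : ∀ a θ, ContinuousOn (fun y => c a y θ) (FlowSet A))
    (μ : Θ → Measure ↥(FlowSet A)) (hprob : ∀ θ, IsProbabilityMeasure (μ θ))
    -- μ is a Bayes correlated Wardrop equilibrium
    (hBCWE : ∀ a b : A,
      ∑ θ, p θ * ∫ y : ↥(FlowSet A), (y : A → ℝ) a * c a (y : A → ℝ) θ ∂(μ θ) ≤
      ∑ θ, p θ * ∫ y : ↥(FlowSet A), (y : A → ℝ) a * c b (y : A → ℝ) θ ∂(μ θ)) :
    ∃ (ε : ℕ → ℝ) (ν : ℕ → Θ → Measure ↥(FlowSet A)),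
      (∀ n, 0 ≤ ε n) ∧ Tendsto ε atTop (nhds 0) ∧
      -- each ν n is the outcome of an (ε n)-BWE for some information structure
      (∀ n : ℕ, ∃ (m : ℕ), 0 < m ∧
        ∃ (t : Fin m → ℕ), (∀ k, 0 < t k) ∧
        ∃ (γ : Fin m → ℝ) (π : Θ → (∀ k, Fin (t k)) → ℝ)
          (σ : ∀ k : Fin m, Fin (t k) → A → ℝ),
          (∀ k, 0 ≤ γ k) ∧ (∑ k, γ k = 1) ∧
          (∀ θ τ, 0 ≤ π θ τ) ∧ (∀ θ, ∑ τ, π θ τ = 1) ∧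
          (∀ k tk a, 0 ≤ σ k tk a) ∧ (∀ k tk, ∑ a, σ k tk a = γ k) ∧
          -- the strategy profile is an (ε n)-Bayes Wardrop equilibrium
          (∀ (k : Fin m) (tk : Fin (t k)) (a b : A), 0 < σ k tk a →
            (∑ θ, ∑ τ ∈ Finset.univ.filter (fun τ : ∀ k, Fin (t k) => τ k = tk),
              p θ * π θ τ * c a (fun b' => ∑ l, σ l (τ l) b') θ) ≤
            (∑ θ, ∑ τ ∈ Finset.univ.filter (fun τ : ∀ k, Fin (t k) => τ k = tk),
              p θ * π θ τ * c b (fun b' => ∑ l, σ l (τ l) b') θ) + ε n) ∧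
          -- whose induced outcome is ν n
          ∃ hagg : ∀ τ : ∀ k, Fin (t k), (fun b => ∑ l, σ l (τ l) b) ∈ FlowSet A,
            ∀ θ, ν n θ =
              ∑ τ, (ENNReal.ofReal (π θ τ)) •
                Measure.dirac (⟨fun b => ∑ l, σ l (τ l) b, hagg τ⟩ : ↥(FlowSet A))) ∧
      -- weak* convergence of the outcomes to μ, state by state
      (∀ (θ : Θ) (f : C(↥(FlowSet A), ℝ)),
        Tendsto (fun n => ∫ y, f y ∂(ν n θ)) atTop (nhds (∫ y, f y ∂(μ θ)))) := by
  classical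
  haveI : ∀ θ, IsProbabilityMeasure (μ θ) := hprob
  set e : Fin (Fintype.card A) ≃ A := (Fintype.equivFin A).symm with he
  -- continuity of the payoff integrands on the simplex
  have hcR : ∀ (x : A) (θ : Θ),
      Continuous (fun y : ↥(FlowSet A) => c x (y : A → ℝ) θ) := fun x θ => (hc x θ).restrict
  have hgc : ∀ (a x : A) (θ : Θ),
      Continuous (fun y : ↥(FlowSet A) => (y : A → ℝ) a * c x (y : A → ℝ) θ) := fun a x θ =>
    (((continuous_apply a).comp continuous_subtype_val).mul (hcR x θ))
  -- the approximating expected payoffs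
  set G : ℕ → A → A → ℝ := fun n a x =>
    ∑ θ, p θ * ∫ y, ((empF (n+1) n.succ_pos (rv (n+1) y)) : A → ℝ) a *
        c x ((empF (n+1) n.succ_pos (rv (n+1) y)) : A → ℝ) θ ∂(μ θ) with hGdef
  set Glim : A → A → ℝ := fun a x =>
    ∑ θ, p θ * ∫ y : ↥(FlowSet A), (y : A → ℝ) a * c x (y : A → ℝ) θ ∂(μ θ) with hGlimdef
  have hG : ∀ a x, Tendsto (fun n => G n a x) atTop (nhds (Glim a x)) := by
    intro a x
    apply tendsto_finset_sum
    intro θ _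
    exact (tendsto_integral_comp (μ θ) _ (hgc a x θ)).const_mul (p θ)
  have hGlim : ∀ a b : A, Glim a a - Glim a b ≤ 0 := fun a b => sub_nonpos.mpr (hBCWE a b)
  -- the errors
  set ε : ℕ → ℝ := fun n => ∑ a : A, ∑ b : A, max (G n a a - G n a b) 0 with hεdef
  have hε0 : ∀ n, 0 ≤ ε n := fun n =>
    Finset.sum_nonneg fun a _ => Finset.sum_nonneg fun b _ => le_max_right _ _
  have hεlim : Tendsto ε atTop (nhds 0) := by
    have h0 : (0:ℝ) = ∑ _a : A, ∑ _b : A, (0:ℝ) := by simp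
    rw [h0]
    apply tendsto_finset_sum; intro a _
    apply tendsto_finset_sum; intro b _
    have hterm := ((hG a a).sub (hG a b)).max (tendsto_const_nhds (x := (0:ℝ)))
    rwa [max_eq_right (hGlim a b)] at hterm
  have hDle : ∀ (n : ℕ) (a b : A), G n a a - G n a b ≤ ε n := by
    intro n a b
    refine (le_max_left _ 0).trans ?_
    have h1 : max (G n a a - G n a b) 0 ≤ ∑ b' : A, max (G n a a - G n a b') 0 :=
      Finset.single_le_sum (f := fun b' : A => max (G n a a - G n a b') 0)
        (fun b' _ => le_max_right _ _) (Finset.mem_univ b)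
    refine h1.trans ?_
    exact Finset.single_le_sum (f := fun a' : A => ∑ b' : A, max (G n a' a' - G n a' b') 0)
      (fun a' _ => Finset.sum_nonneg fun b' _ => le_max_right _ _) (Finset.mem_univ a)
  -- the information structure data for step n
  set Pi : ℕ → Θ → (Fin (Fintype.card A)) → Type := fun _ _ _ => ℕ with hPi -- dummy
  clear hPi Pi
  set piw : (n : ℕ) → Θ → ((Fin (n+1)) → Fin (Fintype.card A)) → ℝ := fun n θ τ =>
    ∑ v : Fin (n+1) → A, wgt (n+1) (μ θ) v * sw (n+1) v (fun l => e (τ l)) with hpiw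
  set ν : ℕ → Θ → Measure ↥(FlowSet A) := fun n θ =>
    ∑ τ : (Fin (n+1)) → Fin (Fintype.card A), ENNReal.ofReal (piw n θ τ) •
      Measure.dirac (empF (n+1) n.succ_pos (fun l => e (τ l))) with hν
  have hpiw_nonneg : ∀ n θ τ, 0 ≤ piw n θ τ := fun n θ τ =>
    Finset.sum_nonneg fun v _ => mul_nonneg (wgt_nonneg _ _ _) (sw_nonneg _ _ _)
  -- reindexing equivalence between type profiles and arrangements
  have hreidx : ∀ (n : ℕ) (θ : Θ) (g : (Fin (n+1) → A) → ℝ)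
      (hg : ∀ v j, g (shf (n+1) j v) = g v),
      ∑ τ : Fin (n+1) → Fin (Fintype.card A), piw n θ τ * g (fun l => e (τ l))
        = ∑ v : Fin (n+1) → A, wgt (n+1) (μ θ) v * g v := by
    intro n θ g hg
    have hE := Fintype.sum_equiv (Equiv.arrowCongr (Equiv.refl (Fin (n+1))) e)
      (fun τ : Fin (n+1) → Fin (Fintype.card A) => piw n θ τ * g (fun l => e (τ l)))
      (fun v : Fin (n+1) → A => (∑ v' : Fin (n+1) → A, wgt (n+1) (μ θ) v' * sw (n+1) v' v) * g v)
      (by intro τ; rfl)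
    rw [hE]
    simp only [Finset.sum_mul]
    rw [Finset.sum_comm]
    refine Finset.sum_congr rfl fun v' _ => ?_
    simp only [mul_assoc]
    rw [← Finset.mul_sum, sum_sw_mul_univ (n+1) v' g (hg v')]
  -- filtered reindexing
  have hreidxf : ∀ (n : ℕ) (θ : Θ) (k : Fin (n+1)) (tk : Fin (Fintype.card A))
      (g : (Fin (n+1) → A) → ℝ) (hg : ∀ v j, g (shf (n+1) j v) = g v),
      ∑ τ ∈ Finset.univ.filter
          (fun τ : Fin (n+1) → Fin (Fintype.card A) => τ k = tk),
          piw n θ τ * g (fun l => e (τ l))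
        = ∑ v : Fin (n+1) → A, wgt (n+1) (μ θ) v * (emp (n+1) v (e tk) * g v) := by
    intro n θ k tk g hg
    have hE : ∑ τ ∈ Finset.univ.filter
          (fun τ : Fin (n+1) → Fin (Fintype.card A) => τ k = tk),
          piw n θ τ * g (fun l => e (τ l))
        = ∑ v ∈ Finset.univ.filter (fun v : Fin (n+1) → A => v k = e tk),
          (∑ v' : Fin (n+1) → A, wgt (n+1) (μ θ) v' * sw (n+1) v' v) * g v := by
      apply Finset.sum_equiv (Equiv.arrowCongr (Equiv.refl (Fin (n+1))) e)
      · intro τ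
        simp only [Finset.mem_filter, Finset.mem_univ, true_and]
        constructor
        · intro h; rw [show ((Equiv.arrowCongr (Equiv.refl (Fin (n+1))) e) τ) k
            = e (τ k) from rfl, h]
        · intro h
          have : e (τ k) = e tk := h
          exact e.injective this
      · intro τ _; rfl
    rw [hE]
    simp only [Finset.sum_mul]
    rw [Finset.sum_comm]
    refine Finset.sum_congr rfl fun v' _ => ?_
    simp only [mul_assoc]
    rw [← Finset.mul_sum, sum_sw_mul_filter (n+1) v' k (e tk) g (hg v')]
  refine ⟨ε, ν, hε0, hεlim, ?_, ?_⟩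
  · -- each n : information structure and ε-BWE
    intro n
    refine ⟨n+1, n.succ_pos, fun _ => Fintype.card A, fun _ => Fintype.card_pos,
      fun _ => ((n+1 : ℕ) : ℝ)⁻¹, fun θ τ => piw n θ τ,
      fun _ tk a => if e tk = a then ((n+1 : ℕ) : ℝ)⁻¹ else 0,
      fun _ => by positivity, ?_, fun θ τ => hpiw_nonneg n θ τ, ?_, ?_, ?_, ?_, ?_⟩
    · rw [Finset.sum_const, Finset.card_univ, Fintype.card_fin, nsmul_eq_mul,
        mul_inv_cancel₀ (by positivity)]
    · -- ∑ τ, π = 1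
      intro θ
      have h1 := hreidx n θ (fun _ => 1) (fun _ _ => rfl)
      simp only [mul_one] at h1
      rw [h1, sum_wgt]
    · -- σ nonneg
      intro k tk a
      dsimp only
      split <;> positivity
    · -- σ sums to γ
      intro k tk
      rw [Finset.sum_ite_eq, if_pos (Finset.mem_univ _)]
    · -- incentive constraints
      intro k tk a b hσa
      have hσa' : 0 < (if e tk = a then ((n+1 : ℕ) : ℝ)⁻¹ else 0) := hσa
      have ha : e tk = a := by
        by_contra hne
        rw [if_neg hne] at hσa'
        exact lt_irrefl 0 hσa'
      subst ha
      have key : ∀ x : A,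
          (∑ θ, ∑ τ ∈ Finset.univ.filter
              (fun τ : (∀ _ : Fin (n+1), Fin (Fintype.card A)) => τ k = tk),
            p θ * piw n θ τ * c x (fun b' => ∑ l,
              (if e (τ l) = b' then ((n+1 : ℕ) : ℝ)⁻¹ else 0)) θ) = G n (e tk) x := by
        intro x
        rw [hGdef]
        refine Finset.sum_congr rfl fun θ _ => ?_
        have hstep : ∑ τ ∈ Finset.univ.filter
              (fun τ : (∀ _ : Fin (n+1), Fin (Fintype.card A)) => τ k = tk),
            p θ * piw n θ τ * c x (fun b' => ∑ l,
              (if e (τ l) = b' then ((n+1 : ℕ) : ℝ)⁻¹ else 0)) θ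
            = p θ * ∑ τ ∈ Finset.univ.filter
              (fun τ : (∀ _ : Fin (n+1), Fin (Fintype.card A)) => τ k = tk),
              piw n θ τ * c x (emp (n+1) (fun l => e (τ l))) θ := by
          rw [Finset.mul_sum]
          exact Finset.sum_congr rfl fun τ _ => by rw [mul_assoc]; rfl
        rw [hstep, hreidxf n θ k tk (fun v => c x (emp (n+1) v) θ)
          (fun v j => by show c x (emp (n+1) (shf (n+1) j v)) θ = c x (emp (n+1) v) θ
                         rw [emp_shf])]
        congr 1
        rw [← integral_comp_rv (n+1) (μ θ)
          (fun v => emp (n+1) v (e tk) * c x (emp (n+1) v) θ)]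
        rfl
      rw [key (e tk), key b]
      have := hDle n (e tk) b
      linarith
    · -- outcome equation
      refine ⟨fun τ => emp_mem (n+1) n.succ_pos (fun l => e (τ l)), fun θ => ?_⟩
      rfl
  · -- weak* convergence
    intro θ f
    have hint : ∀ n : ℕ, ∫ y, f y ∂(ν n θ)
        = ∫ y, f (empF (n+1) n.succ_pos (rv (n+1) y)) ∂(μ θ) := by
      intro n
      rw [hν]
      rw [MeasureTheory.integral_finset_sum_measure]
      · have h1 : ∀ τ : Fin (n+1) → Fin (Fintype.card A),
            ∫ y, f y ∂(ENNReal.ofReal (piw n θ τ) •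
              Measure.dirac (empF (n+1) n.succ_pos (fun l => e (τ l))))
            = piw n θ τ * f (empF (n+1) n.succ_pos (fun l => e (τ l))) := by
          intro τ
          rw [MeasureTheory.integral_smul_measure, MeasureTheory.integral_dirac,
            ENNReal.toReal_ofReal (hpiw_nonneg n θ τ), smul_eq_mul]
        rw [Finset.sum_congr rfl fun τ _ => h1 τ]
        rw [hreidx n θ (fun v => f (empF (n+1) n.succ_pos v))
          (fun v j => by
            show f (empF (n+1) n.succ_pos (shf (n+1) j v)) = f (empF (n+1) n.succ_pos v)
            rw [show empF (n+1) n.succ_pos (shf (n+1) j v)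
              = empF (n+1) n.succ_pos v from Subtype.ext (emp_shf (n+1) j v)])]
        rw [← integral_comp_rv (n+1) (μ θ) (fun v => f (empF (n+1) n.succ_pos v))]
      · intro τ _
        by_cases h0 : ENNReal.ofReal (piw n θ τ) = 0
        · rw [h0, zero_smul]
          exact MeasureTheory.integrable_zero_measure
        · apply MeasureTheory.Integrable.smul_measure _ ENNReal.ofReal_ne_top
          exact f.continuous.integrable_of_hasCompactSupport
            (HasCompactSupport.of_compactSpace _)
    rw [show (fun n => ∫ y, f y ∂(ν n θ))
      = fun n => ∫ y, f (empF (n+1) n.succ_pos (rv (n+1) y)) ∂(μ θ) from funext hint]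
    exact tendsto_integral_comp (μ θ) _ f.continuous
end

section
/- Let Γ = (A, Θ, p, c) be an anonymous nonatomic game with incomplete information such that for every θ ∈ Θ there is a potential Φ_θ for the state-θ costs that is strictly convex on 𝓕. Then for every information structure (γ, T, π) the Bayes Wardrop equilibrium aggregate flows are unique: if y(·) and z(·) are two Bayes Wardrop equilibria, then y(τ) = z(τ) for every type profile τ ∈ T with π(τ|θ) > 0 for some θ ∈ Θ; in particular any two Bayes Wardrop equilibria induce the same outcome. -/
open MeasureTheory

lemma wsum_le {A : Type*} [Fintype A] [Nonempty A] (w v C : A → ℝ)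
    (hw : ∀ a, 0 ≤ w a) (hv : ∀ a, 0 ≤ v a) (hsum : ∑ a, w a = ∑ a, v a)
    (h : ∀ a b, 0 < w a → C a ≤ C b) :
    ∑ a, w a * C a ≤ ∑ a, v a * C a := by
  obtain ⟨a0, -, ha0⟩ := Finset.exists_min_image Finset.univ C
    ⟨Classical.arbitrary A, Finset.mem_univ _⟩
  have h1 : ∑ a, w a * C a = ∑ a, w a * C a0 := by
    refine Finset.sum_congr rfl fun a _ => ?_
    rcases (hw a).lt_or_eq with hlt | heq
    · rw [le_antisymm (h a a0 hlt) (ha0 a (Finset.mem_univ a))]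
    · rw [← heq, zero_mul, zero_mul]
  rw [h1, ← Finset.sum_mul, hsum, Finset.sum_mul]
  exact Finset.sum_le_sum fun a _ =>
    mul_le_mul_of_nonneg_left (ha0 a (Finset.mem_univ a)) (hv a)

lemma strict_grad {E : Type*} [NormedAddCommGroup E] [NormedSpace ℝ E]
    {f : E → ℝ} {s : Set E} (hd : Differentiable ℝ f) (hs : StrictConvexOn ℝ s f)
    {y z : E} (hy : y ∈ s) (hz : z ∈ s) (hne : y ≠ z) :
    f y + fderiv ℝ f y (z - y) < f z := by
  set v := z - y with hv
  have hvne : v ≠ 0 := sub_ne_zero.mpr (Ne.symm hne)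
  have hcurve : ∀ t : ℝ, HasDerivAt (fun t : ℝ => y + t • v) v t := fun t => by
    simpa using ((hasDerivAt_id t).smul_const v).const_add y
  have hmem : ∀ t ∈ Set.Icc (0:ℝ) 1, y + t • v ∈ s := fun t ht => by
    have h2 := hs.1 hy hz (by linarith [ht.2] : (0:ℝ) ≤ 1 - t) ht.1 (by ring)
    convert h2 using 1
    rw [hv]; module
  have hg : StrictConvexOn ℝ (Set.Icc (0:ℝ) 1) (fun t => f (y + t • v)) := by
    refine ⟨convex_Icc 0 1, fun t1 ht1 t2 ht2 hne' a b ha hb hab => ?_⟩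
    have hp1 : y + t1 • v ∈ s := hmem t1 ht1
    have hp2 : y + t2 • v ∈ s := hmem t2 ht2
    have hpne : y + t1 • v ≠ y + t2 • v := by
      intro hcontra
      have h3 : (t1 - t2) • v = 0 := by
        rw [sub_smul, sub_eq_zero]
        exact add_left_cancel hcontra
      rcases smul_eq_zero.mp h3 with h4 | h4
      · exact hne' (by linarith [sub_eq_zero.mp h4])
      · exact hvne h4
    have hkey := hs.2 hp1 hp2 hpne ha hb hab
    have harg : a • (y + t1 • v) + b • (y + t2 • v) = y + (a • t1 + b • t2) • v := by
      have hb' : b = 1 - a := by linarith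
      subst hb'
      simp only [smul_eq_mul]
      module
    rw [harg] at hkey
    simpa using hkey
  have hgd : ∀ t : ℝ, HasDerivAt (fun t => f (y + t • v)) (fderiv ℝ f (y + t • v) v) t :=
    fun t => (hd (y + t • v)).hasFDerivAt.comp_hasDerivAt t (hcurve t)
  have hslope := hg.lt_slope_of_hasDerivAt (Set.left_mem_Icc.mpr one_pos.le)
    (Set.right_mem_Icc.mpr one_pos.le) one_pos (hgd 0)
  rw [slope_def_field] at hslope
  simp only [zero_smul, add_zero, one_smul, sub_zero, div_one] at hslope
  have hz' : y + v = z := by rw [hv]; abel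
  rw [hz'] at hslope
  linarith
set_option maxHeartbeats 1000000 in
lemma auxD {A Θ K : Type*} [Fintype A] [Nonempty A] [DecidableEq A]
    [Fintype Θ] [Fintype K] [DecidableEq K]
    (p : Θ → ℝ) (c : A → (A → ℝ) → Θ → ℝ)
    (T : K → Type*) [∀ k, Fintype (T k)] [∀ k, DecidableEq (T k)]
    (π : Θ → (∀ k, T k) → ℝ)
    (σ ρ : ∀ k, T k → A → ℝ)
    (hσ0 : ∀ k t a, 0 ≤ σ k t a) (hρ0 : ∀ k t a, 0 ≤ ρ k t a)
    (hsum : ∀ k t, ∑ a, σ k t a = ∑ a, ρ k t a)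
    (hBWE : ∀ (k : K) (t : T k) (a b : A), 0 < σ k t a →
      (∑ θ, ∑ τ ∈ Finset.univ.filter (fun τ : ∀ k, T k => τ k = t),
        p θ * π θ τ * c a (fun b' => ∑ l, σ l (τ l) b') θ) ≤
      (∑ θ, ∑ τ ∈ Finset.univ.filter (fun τ : ∀ k, T k => τ k = t),
        p θ * π θ τ * c b (fun b' => ∑ l, σ l (τ l) b') θ)) :
    0 ≤ ∑ θ, ∑ τ : ∀ k, T k, p θ * π θ τ *
      ∑ a, ((∑ l, ρ l (τ l) a) - (∑ l, σ l (τ l) a)) *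
        c a (fun b' => ∑ l, σ l (τ l) b') θ := by
  classical
  set Y : (∀ k, T k) → (A → ℝ) := fun τ b' => ∑ l, σ l (τ l) b' with hY
  set C : ∀ k, T k → A → ℝ := fun k t a =>
    ∑ θ, ∑ τ ∈ Finset.univ.filter (fun τ : ∀ k, T k => τ k = t),
      p θ * π θ τ * c a (Y τ) θ with hC
  have h1 : ∀ θ τ, p θ * π θ τ *
      (∑ a, ((∑ l, ρ l (τ l) a) - (∑ l, σ l (τ l) a)) * c a (Y τ) θ)
      = ∑ k, ∑ a, (ρ k (τ k) a - σ k (τ k) a) * (p θ * π θ τ * c a (Y τ) θ) := by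
    intro θ τ
    rw [Finset.mul_sum]
    rw [show (∑ a, p θ * π θ τ * (((∑ l, ρ l (τ l) a) - (∑ l, σ l (τ l) a)) * c a (Y τ) θ))
        = ∑ a, ∑ k, (ρ k (τ k) a - σ k (τ k) a) * (p θ * π θ τ * c a (Y τ) θ) from
      Finset.sum_congr rfl fun a _ => by
        rw [← Finset.sum_sub_distrib, Finset.sum_mul, Finset.mul_sum]
        exact Finset.sum_congr rfl fun k _ => by ring]
    exact Finset.sum_comm
  calc (0:ℝ) ≤ ∑ k, ∑ t : T k, ∑ a, (ρ k t a - σ k t a) * C k t a := by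
        refine Finset.sum_nonneg fun k _ => Finset.sum_nonneg fun t _ => ?_
        have h2 : ∑ a, (ρ k t a - σ k t a) * C k t a
            = (∑ a, ρ k t a * C k t a) - ∑ a, σ k t a * C k t a := by
          rw [← Finset.sum_sub_distrib]
          exact Finset.sum_congr rfl fun a _ => by ring
        rw [h2, sub_nonneg]
        exact wsum_le (σ k t) (ρ k t) (C k t) (hσ0 k t) (hρ0 k t) (hsum k t)
          (fun a b hb => hBWE k t a b hb)
    _ = ∑ k, ∑ θ, ∑ τ : ∀ k, T k, ∑ a,
          (ρ k (τ k) a - σ k (τ k) a) * (p θ * π θ τ * c a (Y τ) θ) := by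
        refine Finset.sum_congr rfl fun k _ => ?_
        calc ∑ t : T k, ∑ a, (ρ k t a - σ k t a) * C k t a
            = ∑ t : T k, ∑ θ, ∑ τ ∈ Finset.univ.filter (fun τ : ∀ k, T k => τ k = t),
                ∑ a, (ρ k (τ k) a - σ k (τ k) a) * (p θ * π θ τ * c a (Y τ) θ) := by
              refine Finset.sum_congr rfl fun t _ => ?_
              rw [hC]
              simp only
              rw [show (∑ a, (ρ k t a - σ k t a) *
                  ∑ θ, ∑ τ ∈ Finset.univ.filter (fun τ : ∀ k, T k => τ k = t),
                    p θ * π θ τ * c a (Y τ) θ)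
                  = ∑ a, ∑ θ, ∑ τ ∈ Finset.univ.filter (fun τ : ∀ k, T k => τ k = t),
                    (ρ k (τ k) a - σ k (τ k) a) * (p θ * π θ τ * c a (Y τ) θ) from
                Finset.sum_congr rfl fun a _ => by
                  rw [Finset.mul_sum]
                  refine Finset.sum_congr rfl fun θ _ => ?_
                  rw [Finset.mul_sum]
                  refine Finset.sum_congr rfl fun τ hτ => ?_
                  rw [(Finset.mem_filter.mp hτ).2]]
              rw [Finset.sum_comm]
              exact Finset.sum_congr rfl fun θ _ => Finset.sum_comm
            _ = ∑ θ, ∑ t : T k, ∑ τ ∈ Finset.univ.filter (fun τ : ∀ k, T k => τ k = t),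
                ∑ a, (ρ k (τ k) a - σ k (τ k) a) * (p θ * π θ τ * c a (Y τ) θ) :=
              Finset.sum_comm
            _ = ∑ θ, ∑ τ : ∀ k, T k, ∑ a,
                (ρ k (τ k) a - σ k (τ k) a) * (p θ * π θ τ * c a (Y τ) θ) := by
              refine Finset.sum_congr rfl fun θ _ => ?_
              exact Finset.sum_fiberwise Finset.univ (fun τ : ∀ k, T k => τ k) _
    _ = ∑ θ, ∑ k, ∑ τ : ∀ k, T k, ∑ a,
          (ρ k (τ k) a - σ k (τ k) a) * (p θ * π θ τ * c a (Y τ) θ) :=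
        Finset.sum_comm
    _ = ∑ θ, ∑ τ : ∀ k, T k, ∑ k, ∑ a,
          (ρ k (τ k) a - σ k (τ k) a) * (p θ * π θ τ * c a (Y τ) θ) :=
        Finset.sum_congr rfl fun θ _ => Finset.sum_comm
    _ = ∑ θ, ∑ τ : ∀ k, T k, p θ * π θ τ *
          ∑ a, ((∑ l, ρ l (τ l) a) - (∑ l, σ l (τ l) a)) * c a (Y τ) θ :=
        Finset.sum_congr rfl fun θ _ => Finset.sum_congr rfl fun τ _ => (h1 θ τ).symm

set_option maxHeartbeats 1000000 in
/-- In an ANGII with a state-wise strictly convex potential, for every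
information structure, Bayes Wardrop equilibrium aggregate flows are unique (on type
profiles of positive probability), hence any two BWE induce the same outcome. -/
theorem stmt11 {A Θ K : Type*} [Fintype A] [Nonempty A] [DecidableEq A]
    [Fintype Θ] [Nonempty Θ] [Fintype K] [Nonempty K] [DecidableEq K]
    (p : Θ → ℝ) (hp : ∀ θ, 0 < p θ) (hp1 : ∑ θ, p θ = 1)
    (c : A → (A → ℝ) → Θ → ℝ)
    (hc : ∀ a θ, ContinuousOn (fun y => c a y θ) (FlowSet A))
    -- the state-wise strictly convex potential
    (Φ : Θ → (A → ℝ) → ℝ) (hdiff : ∀ θ, Differentiable ℝ (Φ θ))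
    (hpot : ∀ θ, ∀ y ∈ FlowSet A, ∀ a : A, fderiv ℝ (Φ θ) y (Pi.single a 1) = c a y θ)
    (hconv : ∀ θ, StrictConvexOn ℝ (FlowSet A) (Φ θ))
    -- the information structure
    (γ : K → ℝ) (hγ0 : ∀ k, 0 ≤ γ k) (hγ1 : ∑ k, γ k = 1)
    (T : K → Type*) [∀ k, Fintype (T k)] [∀ k, Nonempty (T k)] [∀ k, DecidableEq (T k)]
    (π : Θ → (∀ k, T k) → ℝ)
    (hπ0 : ∀ θ τ, 0 ≤ π θ τ) (hπ1 : ∀ θ, ∑ τ, π θ τ = 1)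
    -- two strategy profiles
    (σ ρ : ∀ k, T k → A → ℝ)
    (hσ0 : ∀ k t a, 0 ≤ σ k t a) (hσ1 : ∀ k t, ∑ a, σ k t a = γ k)
    (hρ0 : ∀ k t a, 0 ≤ ρ k t a) (hρ1 : ∀ k t, ∑ a, ρ k t a = γ k)
    -- both are Bayes Wardrop equilibria
    (hBWEσ : ∀ (k : K) (t : T k) (a b : A), 0 < σ k t a →
      (∑ θ, ∑ τ ∈ Finset.univ.filter (fun τ : ∀ k, T k => τ k = t),
        p θ * π θ τ * c a (fun b' => ∑ l, σ l (τ l) b') θ) ≤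
      (∑ θ, ∑ τ ∈ Finset.univ.filter (fun τ : ∀ k, T k => τ k = t),
        p θ * π θ τ * c b (fun b' => ∑ l, σ l (τ l) b') θ))
    (hBWEρ : ∀ (k : K) (t : T k) (a b : A), 0 < ρ k t a →
      (∑ θ, ∑ τ ∈ Finset.univ.filter (fun τ : ∀ k, T k => τ k = t),
        p θ * π θ τ * c a (fun b' => ∑ l, ρ l (τ l) b') θ) ≤
      (∑ θ, ∑ τ ∈ Finset.univ.filter (fun τ : ∀ k, T k => τ k = t),
        p θ * π θ τ * c b (fun b' => ∑ l, ρ l (τ l) b') θ)) :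
    -- conclusion: equal aggregate flows on positive-probability type profiles ...
    (∀ τ : ∀ k, T k, (∃ θ, 0 < π θ τ) →
      ∀ a : A, ∑ l, σ l (τ l) a = ∑ l, ρ l (τ l) a) ∧
    -- ... and in particular the same induced outcome
    (∃ (hσF : ∀ τ : ∀ k, T k, (fun b => ∑ l, σ l (τ l) b) ∈ FlowSet A)
       (hρF : ∀ τ : ∀ k, T k, (fun b => ∑ l, ρ l (τ l) b) ∈ FlowSet A),
      ∀ θ,
        (∑ τ, (ENNReal.ofReal (π θ τ)) •
          Measure.dirac (⟨fun b => ∑ l, σ l (τ l) b, hσF τ⟩ : ↥(FlowSet A))) =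
        (∑ τ, (ENNReal.ofReal (π θ τ)) •
          Measure.dirac (⟨fun b => ∑ l, ρ l (τ l) b, hρF τ⟩ : ↥(FlowSet A)))) := by
  classical
  have hYF : ∀ τ : ∀ k, T k, (fun b => ∑ l, σ l (τ l) b) ∈ FlowSet A := fun τ =>
    ⟨fun a => Finset.sum_nonneg fun l _ => hσ0 l (τ l) a, by
      rw [Finset.sum_comm]
      simp only [hσ1]
      exact hγ1⟩
  have hZF : ∀ τ : ∀ k, T k, (fun b => ∑ l, ρ l (τ l) b) ∈ FlowSet A := fun τ =>
    ⟨fun a => Finset.sum_nonneg fun l _ => hρ0 l (τ l) a, by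
      rw [Finset.sum_comm]
      simp only [hρ1]
      exact hγ1⟩
  -- gradient expansion
  have hgrad : ∀ θ (y' : A → ℝ), y' ∈ FlowSet A → ∀ v : A → ℝ,
      fderiv ℝ (Φ θ) y' v = ∑ a, v a * c a y' θ := by
    intro θ y' hy' v
    have hv : v = ∑ a, v a • (Pi.single a 1 : A → ℝ) := by
      ext b
      simp [Pi.single_apply]
    conv_lhs => rw [hv]
    rw [map_sum]
    exact Finset.sum_congr rfl fun a _ => by rw [_root_.map_smul, hpot θ y' hy' a, smul_eq_mul]
  -- strict first-order inequality
  have hstrict : ∀ θ (y' z' : A → ℝ), y' ∈ FlowSet A → z' ∈ FlowSet A → y' ≠ z' →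
      Φ θ y' + ∑ a, (z' a - y' a) * c a y' θ < Φ θ z' := by
    intro θ y' z' hy' hz' hne
    have h := strict_grad (hdiff θ) (hconv θ) hy' hz' hne
    rwa [hgrad θ y' hy' (z' - y')] at h
  have hweak : ∀ θ (y' z' : A → ℝ), y' ∈ FlowSet A → z' ∈ FlowSet A →
      Φ θ y' + ∑ a, (z' a - y' a) * c a y' θ ≤ Φ θ z' := by
    intro θ y' z' hy' hz'
    by_cases hne : y' = z'
    · subst hne
      simp
    · exact (hstrict θ y' z' hy' hz' hne).le
  -- the two variational inequalities
  have hDY : (0:ℝ) ≤ ∑ θ, ∑ τ : ∀ k, T k, p θ * π θ τ *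
      ∑ a, ((∑ l, ρ l (τ l) a) - (∑ l, σ l (τ l) a)) *
        c a (fun b' => ∑ l, σ l (τ l) b') θ :=
    auxD p c T π σ ρ hσ0 hρ0 (fun k t => by rw [hσ1, hρ1]) hBWEσ
  have hDZ : (0:ℝ) ≤ ∑ θ, ∑ τ : ∀ k, T k, p θ * π θ τ *
      ∑ a, ((∑ l, σ l (τ l) a) - (∑ l, ρ l (τ l) a)) *
        c a (fun b' => ∑ l, ρ l (τ l) b') θ :=
    auxD p c T π ρ σ hρ0 hσ0 (fun k t => by rw [hσ1, hρ1]) hBWEρ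
  -- the two gap sums
  have hgapY : ∀ θ (τ : ∀ k, T k), (0:ℝ) ≤ p θ * π θ τ *
      (Φ θ (fun b => ∑ l, ρ l (τ l) b) - Φ θ (fun b => ∑ l, σ l (τ l) b) -
        ∑ a, ((∑ l, ρ l (τ l) a) - (∑ l, σ l (τ l) a)) *
          c a (fun b' => ∑ l, σ l (τ l) b') θ) := by
    intro θ τ
    refine mul_nonneg (mul_nonneg (hp θ).le (hπ0 θ τ)) ?_
    have := hweak θ (fun b => ∑ l, σ l (τ l) b) (fun b => ∑ l, ρ l (τ l) b)
      (hYF τ) (hZF τ)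
    linarith
  have hgapZ : ∀ θ (τ : ∀ k, T k), (0:ℝ) ≤ p θ * π θ τ *
      (Φ θ (fun b => ∑ l, σ l (τ l) b) - Φ θ (fun b => ∑ l, ρ l (τ l) b) -
        ∑ a, ((∑ l, σ l (τ l) a) - (∑ l, ρ l (τ l) a)) *
          c a (fun b' => ∑ l, ρ l (τ l) b') θ) := by
    intro θ τ
    refine mul_nonneg (mul_nonneg (hp θ).le (hπ0 θ τ)) ?_
    have := hweak θ (fun b => ∑ l, ρ l (τ l) b) (fun b => ∑ l, σ l (τ l) b)
      (hZF τ) (hYF τ)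
    linarith
  -- total gap sums
  have hGYsum : (∑ θ, ∑ τ : ∀ k, T k, p θ * π θ τ *
      (Φ θ (fun b => ∑ l, ρ l (τ l) b) - Φ θ (fun b => ∑ l, σ l (τ l) b) -
        ∑ a, ((∑ l, ρ l (τ l) a) - (∑ l, σ l (τ l) a)) *
          c a (fun b' => ∑ l, σ l (τ l) b') θ)) +
      (∑ θ, ∑ τ : ∀ k, T k, p θ * π θ τ *
      (Φ θ (fun b => ∑ l, σ l (τ l) b) - Φ θ (fun b => ∑ l, ρ l (τ l) b) -
        ∑ a, ((∑ l, σ l (τ l) a) - (∑ l, ρ l (τ l) a)) *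
          c a (fun b' => ∑ l, ρ l (τ l) b') θ)) +
      (∑ θ, ∑ τ : ∀ k, T k, p θ * π θ τ *
      ∑ a, ((∑ l, ρ l (τ l) a) - (∑ l, σ l (τ l) a)) *
        c a (fun b' => ∑ l, σ l (τ l) b') θ) +
      (∑ θ, ∑ τ : ∀ k, T k, p θ * π θ τ *
      ∑ a, ((∑ l, σ l (τ l) a) - (∑ l, ρ l (τ l) a)) *
        c a (fun b' => ∑ l, ρ l (τ l) b') θ) = 0 := by
    simp only [← Finset.sum_add_distrib]
    refine Finset.sum_eq_zero fun θ _ => Finset.sum_eq_zero fun τ _ => by ring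
  have hGY0 : (∑ θ, ∑ τ : ∀ k, T k, p θ * π θ τ *
      (Φ θ (fun b => ∑ l, ρ l (τ l) b) - Φ θ (fun b => ∑ l, σ l (τ l) b) -
        ∑ a, ((∑ l, ρ l (τ l) a) - (∑ l, σ l (τ l) a)) *
          c a (fun b' => ∑ l, σ l (τ l) b') θ)) = 0 := by
    have h1 : (0:ℝ) ≤ ∑ θ, ∑ τ : ∀ k, T k, p θ * π θ τ *
        (Φ θ (fun b => ∑ l, ρ l (τ l) b) - Φ θ (fun b => ∑ l, σ l (τ l) b) -
          ∑ a, ((∑ l, ρ l (τ l) a) - (∑ l, σ l (τ l) a)) *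
            c a (fun b' => ∑ l, σ l (τ l) b') θ) :=
      Finset.sum_nonneg fun θ _ => Finset.sum_nonneg fun τ _ => hgapY θ τ
    have h2 : (0:ℝ) ≤ ∑ θ, ∑ τ : ∀ k, T k, p θ * π θ τ *
        (Φ θ (fun b => ∑ l, σ l (τ l) b) - Φ θ (fun b => ∑ l, ρ l (τ l) b) -
          ∑ a, ((∑ l, σ l (τ l) a) - (∑ l, ρ l (τ l) a)) *
            c a (fun b' => ∑ l, ρ l (τ l) b') θ) :=
      Finset.sum_nonneg fun θ _ => Finset.sum_nonneg fun τ _ => hgapZ θ τ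
    linarith
  -- termwise vanishing, hence equality of aggregates
  have key : ∀ τ : ∀ k, T k, (∃ θ, 0 < π θ τ) →
      ∀ a : A, ∑ l, σ l (τ l) a = ∑ l, ρ l (τ l) a := by
    intro τ hτ a
    obtain ⟨θ0, hθ0⟩ := hτ
    by_contra hne
    have hfne : (fun b => ∑ l, σ l (τ l) b) ≠ (fun b => ∑ l, ρ l (τ l) b) := by
      intro h
      exact hne (congrFun h a)
    have hlt := hstrict θ0 (fun b => ∑ l, σ l (τ l) b) (fun b => ∑ l, ρ l (τ l) b)
      (hYF τ) (hZF τ) hfne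
    have hpos : (0:ℝ) < p θ0 * π θ0 τ *
        (Φ θ0 (fun b => ∑ l, ρ l (τ l) b) - Φ θ0 (fun b => ∑ l, σ l (τ l) b) -
          ∑ a, ((∑ l, ρ l (τ l) a) - (∑ l, σ l (τ l) a)) *
            c a (fun b' => ∑ l, σ l (τ l) b') θ0) := by
      refine mul_pos (mul_pos (hp θ0) hθ0) ?_
      linarith
    have h1 := (Finset.sum_eq_zero_iff_of_nonneg
      (fun θ (_ : θ ∈ Finset.univ) =>
        Finset.sum_nonneg fun τ' _ => hgapY θ τ')).mp hGY0 θ0 (Finset.mem_univ θ0)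
    have h2 := (Finset.sum_eq_zero_iff_of_nonneg
      (fun τ' (_ : τ' ∈ (Finset.univ : Finset (∀ k, T k))) => hgapY θ0 τ')).mp
      h1 τ (Finset.mem_univ τ)
    rw [h2] at hpos
    exact lt_irrefl 0 hpos
  refine ⟨key, hYF, hZF, fun θ => Finset.sum_congr rfl fun τ _ => ?_⟩
  rcases (hπ0 θ τ).eq_or_lt with h | h
  · rw [← h]
    simp
  · have : (⟨fun b => ∑ l, σ l (τ l) b, hYF τ⟩ : ↥(FlowSet A)) =
        (⟨fun b => ∑ l, ρ l (τ l) b, hZF τ⟩ : ↥(FlowSet A)) :=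
      Subtype.ext (funext fun b => key τ ⟨θ, h⟩ b)
    rw [this]
end

section
/- Let Γ = (A, Θ, p, c) be an anonymous nonatomic game with incomplete information. For each n ≥ 1, let β^n be a Bayes correlated equilibrium of the n-player game Γ_n with induced outcome μ^n. If there is a strictly increasing sequence (n_j) and an outcome μ such that for every θ ∈ Θ, μ^{n_j}(·|θ) converges weak* to μ(·|θ), then μ is a Bayes correlated Wardrop equilibrium of Γ. -/
open MeasureTheory Filter

/-- The flow induced by an action profile of `n` players. -/
noncomputable def flowOf {A : Type*} [Fintype A] [DecidableEq A] {n : ℕ}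
    (v : Fin n → A) : A → ℝ :=
  fun a => (∑ i, if v i = a then (1 : ℝ) else 0) / n

lemma flowOf_mem {A : Type*} [Fintype A] [DecidableEq A] {n : ℕ} (hn : 0 < n)
    (v : Fin n → A) : flowOf v ∈ FlowSet A := by
  constructor
  · intro a
    apply div_nonneg _ (Nat.cast_nonneg n)
    exact Finset.sum_nonneg fun i _ => by split <;> norm_num
  · have h1 : ∑ a, flowOf v a = (∑ a, ∑ i, if v i = a then (1 : ℝ) else 0) / n := by
      rw [Finset.sum_div]; rfl
    rw [h1, Finset.sum_comm]
    have h2 : ∀ i : Fin n, (∑ a, if v i = a then (1 : ℝ) else 0) = 1 := by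
      intro i; simp
    rw [Finset.sum_congr rfl fun i _ => h2 i]
    simp
    simp [hn.ne']

lemma FlowSet_eq (A : Type*) [Fintype A] : FlowSet A = stdSimplex ℝ A := rfl

lemma FlowSet.coord_le_one {A : Type*} [Fintype A] {y : A → ℝ} (hy : y ∈ FlowSet A) (a : A) :
    y a ≤ 1 := by
  obtain ⟨h0, h1⟩ := hy
  calc y a ≤ ∑ x, y x := Finset.single_le_sum (fun x _ => h0 x) (Finset.mem_univ a)
    _ = 1 := h1

noncomputable def pert {A : Type*} [DecidableEq A] (a b : A) (n : ℕ) (y : A → ℝ) : A → ℝ :=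
  fun x => y x + ((if b = x then 1 else 0) - (if a = x then 1 else 0)) / n

lemma flowOf_update {A : Type*} [Fintype A] [DecidableEq A] {n : ℕ}
    (v : Fin n → A) (i : Fin n) (b : A) :
    flowOf (Function.update v i b) = pert (v i) b n (flowOf v) := by
  funext x
  show _ / _ = _ / _ + _ / _
  rw [← add_div]
  congr 1
  have e1 : (∑ j, if Function.update v i b j = x then (1:ℝ) else 0)
      = (if b = x then 1 else 0) + ∑ j ∈ Finset.univ.erase i, (if v j = x then (1:ℝ) else 0) := by
    rw [← Finset.add_sum_erase _ _ (Finset.mem_univ i)]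
    simp only [Function.update_self]
    congr 1
    exact Finset.sum_congr rfl fun j hj => by
      rw [Function.update_of_ne (Finset.ne_of_mem_erase hj)]
  have e2 : (∑ j, if v j = x then (1:ℝ) else 0)
      = (if v i = x then 1 else 0) + ∑ j ∈ Finset.univ.erase i, (if v j = x then (1:ℝ) else 0) :=
    (Finset.add_sum_erase _ _ (Finset.mem_univ i)).symm
  rw [e1, e2]; ring

lemma sum_indicator_eq {A : Type*} [Fintype A] [DecidableEq A] {n : ℕ} (hn : 0 < n)
    (v : Fin n → A) (a : A) :
    (∑ i, if v i = a then (1:ℝ) else 0) = n * flowOf v a := by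
  unfold flowOf
  field_simp

lemma pert_mem {A : Type*} [Fintype A] [DecidableEq A] {n : ℕ} (hn : 0 < n)
    (v : Fin n → A) (a b : A) (ha : flowOf v a ≠ 0) :
    pert a b n (flowOf v) ∈ FlowSet A := by
  obtain ⟨i, hi⟩ : ∃ i, v i = a := by
    by_contra h
    push_neg at h
    apply ha
    unfold flowOf
    rw [Finset.sum_eq_zero fun i _ => by simp [h i], zero_div]
  rw [← hi, ← flowOf_update v i b]
  exact flowOf_mem hn _

lemma dist_pert {A : Type*} [Fintype A] [DecidableEq A] (a b : A) {n : ℕ} (hn : 0 < n)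
    (y : A → ℝ) : dist (pert a b n y) y ≤ 1 / n := by
  have hn' : (0:ℝ) < n := Nat.cast_pos.mpr hn
  rw [dist_pi_le_iff (by positivity)]
  intro x
  rw [Real.dist_eq]
  have hd : pert a b n y x - y x = ((if b = x then (1:ℝ) else 0) - if a = x then 1 else 0) / n := by
    unfold pert; ring
  rw [hd, abs_div, abs_of_pos hn']
  gcongr
  split_ifs <;> norm_num

lemma discrete_ineq {A Θ : Type*} [Fintype A] [DecidableEq A] [Fintype Θ]
    {n : ℕ} (hn : 0 < n)
    (p : Θ → ℝ) (c : A → (A → ℝ) → Θ → ℝ) (β : Θ → (Fin n → A) → ℝ)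
    (hBCE : ∀ (i : Fin n) (a b : A),
      (∑ θ, ∑ v ∈ Finset.univ.filter (fun v : Fin n → A => v i = a),
        p θ * β θ v * c a (flowOf v) θ) ≤
      (∑ θ, ∑ v ∈ Finset.univ.filter (fun v : Fin n → A => v i = a),
        p θ * β θ v * c b (flowOf (Function.update v i b)) θ))
    (a b : A) :
    ∑ θ, ∑ v : Fin n → A, p θ * β θ v * flowOf v a * c a (flowOf v) θ ≤
    ∑ θ, ∑ v : Fin n → A, p θ * β θ v * flowOf v a * c b (pert a b n (flowOf v)) θ := by
  have L : ∀ (g : (Fin n → A) → Θ → ℝ),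
      (∑ i : Fin n, ∑ θ, ∑ v ∈ Finset.univ.filter (fun v : Fin n → A => v i = a),
        p θ * β θ v * g v θ)
      = n * ∑ θ, ∑ v : Fin n → A, p θ * β θ v * flowOf v a * g v θ := by
    intro g
    rw [Finset.mul_sum]
    refine Finset.sum_comm.trans (Finset.sum_congr rfl fun θ _ => ?_)
    calc ∑ i : Fin n, ∑ v ∈ Finset.univ.filter (fun v : Fin n → A => v i = a),
          p θ * β θ v * g v θ
        = ∑ i : Fin n, ∑ v : Fin n → A, if v i = a then p θ * β θ v * g v θ else 0 :=
          Finset.sum_congr rfl fun i _ => Finset.sum_filter _ _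
      _ = ∑ v : Fin n → A, ∑ i : Fin n, if v i = a then p θ * β θ v * g v θ else 0 :=
          Finset.sum_comm
      _ = ∑ v : Fin n → A, (p θ * β θ v * g v θ) * ∑ i : Fin n, (if v i = a then (1:ℝ) else 0) := by
          refine Finset.sum_congr rfl fun v _ => ?_
          rw [Finset.mul_sum]
          exact Finset.sum_congr rfl fun i _ => by split_ifs <;> ring
      _ = n * ∑ v : Fin n → A, p θ * β θ v * flowOf v a * g v θ := by
          rw [Finset.mul_sum]
          refine Finset.sum_congr rfl fun v _ => ?_
          rw [sum_indicator_eq hn]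
          ring
  have key : (∑ i : Fin n, ∑ θ, ∑ v ∈ Finset.univ.filter (fun v : Fin n → A => v i = a),
        p θ * β θ v * c a (flowOf v) θ) ≤
      ∑ i : Fin n, ∑ θ, ∑ v ∈ Finset.univ.filter (fun v : Fin n → A => v i = a),
        p θ * β θ v * c b (pert a b n (flowOf v)) θ := by
    refine Finset.sum_le_sum fun i _ => le_trans (hBCE i a b) (le_of_eq ?_)
    refine Finset.sum_congr rfl fun θ _ => Finset.sum_congr rfl fun v hv => ?_
    rw [flowOf_update v i b, (Finset.mem_filter.mp hv).2]
  rw [L (fun v θ => c a (flowOf v) θ), L (fun v θ => c b (pert a b n (flowOf v)) θ)] at key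
  exact le_of_mul_le_mul_left key (Nat.cast_pos.mpr hn)

lemma integral_sum_dirac_s13 {A : Type*} [Fintype A] [DecidableEq A] {n : ℕ} (hn : 0 < n)
    (f : ↥(FlowSet A) → ℝ) (hf : Continuous f)
    (w : (Fin n → A) → ℝ) (hw : ∀ v, 0 ≤ w v) :
    ∫ y, f y ∂(∑ v : Fin n → A, (ENNReal.ofReal (w v)) •
        Measure.dirac (⟨flowOf v, flowOf_mem hn v⟩ : ↥(FlowSet A)))
      = ∑ v : Fin n → A, w v * f ⟨flowOf v, flowOf_mem hn v⟩ := by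
  rw [integral_finset_sum_measure ?int]
  · exact Finset.sum_congr rfl fun v _ => by
      rw [integral_smul_measure, integral_dirac, ENNReal.toReal_ofReal (hw v), smul_eq_mul]
  case int =>
    intro v _
    refine ⟨hf.measurable.aestronglyMeasurable, ?_⟩
    rw [HasFiniteIntegral, lintegral_smul_measure, lintegral_dirac]
    exact ENNReal.mul_lt_top ENNReal.ofReal_lt_top ENNReal.coe_lt_top


/-- Any weak* accumulation point of Bayes correlated equilibrium
outcomes of the `n`-player games `Γ_n` is a Bayes correlated Wardrop equilibrium of
the nonatomic game `Γ`. -/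
theorem stmt13 {A Θ : Type*} [Fintype A] [Nonempty A] [DecidableEq A]
    [Fintype Θ] [Nonempty Θ]
    (p : Θ → ℝ) (hp : ∀ θ, 0 < p θ) (hp1 : ∑ θ, p θ = 1)
    (c : A → (A → ℝ) → Θ → ℝ)
    (hc : ∀ a θ, ContinuousOn (fun y => c a y θ) (FlowSet A))
    -- for each n ≥ 1, a Bayes correlated equilibrium β n of the n-player game Γ_n
    (β : ∀ n : ℕ, Θ → (Fin n → A) → ℝ)
    (hβ0 : ∀ n, 0 < n → ∀ θ v, 0 ≤ β n θ v)
    (hβ1 : ∀ n, 0 < n → ∀ θ, ∑ v, β n θ v = 1)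
    (hBCE : ∀ n, 0 < n → ∀ (i : Fin n) (a b : A),
      (∑ θ, ∑ v ∈ Finset.univ.filter (fun v : Fin n → A => v i = a),
        p θ * β n θ v * c a (flowOf v) θ) ≤
      (∑ θ, ∑ v ∈ Finset.univ.filter (fun v : Fin n → A => v i = a),
        p θ * β n θ v * c b (flowOf (Function.update v i b)) θ))
    -- the induced outcomes
    (μn : ℕ → Θ → Measure ↥(FlowSet A))
    (hout : ∀ n (hn : 0 < n) (θ : Θ), μn n θ =
      ∑ v : Fin n → A, (ENNReal.ofReal (β n θ v)) •
        Measure.dirac (⟨flowOf v, flowOf_mem hn v⟩ : ↥(FlowSet A)))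
    -- a weak* accumulation point μ along a strictly increasing subsequence
    (nj : ℕ → ℕ) (hnj : StrictMono nj) (hnj1 : ∀ j, 0 < nj j)
    (μ : Θ → Measure ↥(FlowSet A)) (hprob : ∀ θ, IsProbabilityMeasure (μ θ))
    (hconv : ∀ (θ : Θ) (f : C(↥(FlowSet A), ℝ)),
      Tendsto (fun j => ∫ y, f y ∂(μn (nj j) θ)) atTop (nhds (∫ y, f y ∂(μ θ)))) :
    -- conclusion: μ is a Bayes correlated Wardrop equilibrium of Γ
    ∀ a b : A,
      ∑ θ, p θ * ∫ y : ↥(FlowSet A), (y : A → ℝ) a * c a (y : A → ℝ) θ ∂(μ θ) ≤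
      ∑ θ, p θ * ∫ y : ↥(FlowSet A), (y : A → ℝ) a * c b (y : A → ℝ) θ ∂(μ θ) := by
  intro a b
  -- continuous integrands
  have hFcont : ∀ a' : A, ∀ θ : Θ,
      Continuous (fun y : ↥(FlowSet A) => (y : A → ℝ) a * c a' (y : A → ℝ) θ) :=
    fun a' θ => ((continuous_apply a).comp continuous_subtype_val).mul
      (continuousOn_iff_continuous_restrict.mp (hc a' θ))
  set F : A → Θ → C(↥(FlowSet A), ℝ) := fun a' θ => ⟨_, hFcont a' θ⟩ with hF
  -- convergence of the two sequences of sums of integrals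
  have hS : ∀ a' : A, Tendsto
      (fun j => ∑ θ, p θ * ∫ y, (F a' θ) y ∂(μn (nj j) θ)) atTop
      (nhds (∑ θ, p θ * ∫ y, (F a' θ) y ∂(μ θ))) :=
    fun a' => tendsto_finset_sum _ fun θ _ => (hconv θ (F a' θ)).const_mul (p θ)
  refine le_of_forall_pos_le_add fun ε hε => ?_
  -- uniform continuity of c b on the compact flow set
  have hcomp : IsCompact (FlowSet A) := by
    rw [FlowSet_eq]; exact isCompact_stdSimplex _ _
  have hcont2 : ContinuousOn (fun y (θ : Θ) => c b y θ) (FlowSet A) :=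
    continuousOn_pi.mpr fun θ => hc b θ
  have hUC := hcomp.uniformContinuousOn_of_continuous hcont2
  rw [Metric.uniformContinuousOn_iff] at hUC
  obtain ⟨δ, hδ0, hδ⟩ := hUC ε hε
  have hδc : ∀ (θ : Θ) (y y' : A → ℝ), y ∈ FlowSet A → y' ∈ FlowSet A →
      dist y y' < δ → c b y θ ≤ c b y' θ + ε := by
    intro θ y y' hy hy' hd
    have h1 := hδ y hy y' hy' hd
    have h2 : dist (c b y θ) (c b y' θ) ≤
        dist (fun θ => c b y θ) (fun θ => c b y' θ) := dist_le_pi_dist _ _ θ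
    have h3 : dist (c b y θ) (c b y' θ) < ε := lt_of_le_of_lt h2 h1
    rw [Real.dist_eq] at h3
    have := abs_lt.mp h3
    linarith [this.2]
  obtain ⟨N, hN⟩ := exists_nat_one_div_lt hδ0
  refine le_of_tendsto_of_tendsto (hS a) ((hS b).add_const ε) ?_
  filter_upwards [eventually_ge_atTop (N + 1)] with j hj
  set n := nj j with hndef
  have hnpos : 0 < n := hnj1 j
  have hnN : (N + 1 : ℕ) ≤ n := le_trans hj hnj.le_apply
  have h1n : (1 : ℝ) / n < δ := by
    refine lt_of_le_of_lt ?_ hN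
    have h1 : ((N : ℝ) + 1) ≤ n := by exact_mod_cast hnN
    apply one_div_le_one_div_of_le (by positivity) h1
  -- compute integrals against μn n θ
  have hI : ∀ (a' : A) (θ : Θ), ∫ y, (F a' θ) y ∂(μn n θ)
      = ∑ v : Fin n → A, β n θ v * (flowOf v a * c a' (flowOf v) θ) := by
    intro a' θ
    rw [hout n hnpos θ]
    exact integral_sum_dirac_s13 hnpos _ (hFcont a' θ) (β n θ) (hβ0 n hnpos θ)
  simp only [← hndef, hI]
  -- reshape and apply the discrete inequality
  have reshape : ∀ (g : (Fin n → A) → Θ → ℝ),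
      (∑ θ, p θ * ∑ v : Fin n → A, β n θ v * (flowOf v a * g v θ))
      = ∑ θ, ∑ v : Fin n → A, p θ * β n θ v * flowOf v a * g v θ := by
    intro g
    refine Finset.sum_congr rfl fun θ _ => ?_
    rw [Finset.mul_sum]
    exact Finset.sum_congr rfl fun v _ => by ring
  rw [reshape (fun v θ => c a (flowOf v) θ), reshape (fun v θ => c b (flowOf v) θ)]
  have step1 := discrete_ineq hnpos p c (β n) (hBCE n hnpos) a b
  refine le_trans step1 ?_
  have step2 : ∑ θ, ∑ v : Fin n → A, p θ * β n θ v * flowOf v a * c b (pert a b n (flowOf v)) θ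
      ≤ ∑ θ, ∑ v : Fin n → A,
          (p θ * β n θ v * flowOf v a * c b (flowOf v) θ + p θ * β n θ v * flowOf v a * ε) := by
    refine Finset.sum_le_sum fun θ _ => Finset.sum_le_sum fun v _ => ?_
    by_cases hz : flowOf v a = 0
    · simp [hz]
    · have hmem := pert_mem hnpos v a b hz
      have hdist' : dist (pert a b n (flowOf v)) (flowOf v) < δ :=
        lt_of_le_of_lt (dist_pert a b hnpos (flowOf v)) h1n
      have hcb := hδc θ _ _ hmem (flowOf_mem hnpos v) hdist'
      have h0 : 0 ≤ p θ * β n θ v * flowOf v a :=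
        mul_nonneg (mul_nonneg (hp θ).le (hβ0 n hnpos θ v)) ((flowOf_mem hnpos v).1 a)
      have := mul_le_mul_of_nonneg_left hcb h0
      exact this.trans (le_of_eq (mul_add _ _ _))
  refine le_trans step2 ?_
  simp only [Finset.sum_add_distrib]
  gcongr
  have hsum1 : ∑ θ, ∑ v : Fin n → A, p θ * β n θ v * flowOf v a * ε ≤ ε := by
    have hb : ∀ θ, ∑ v : Fin n → A, p θ * β n θ v * flowOf v a * ε ≤ p θ * ε := by
      intro θ
      calc ∑ v : Fin n → A, p θ * β n θ v * flowOf v a * ε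
          ≤ ∑ v : Fin n → A, p θ * β n θ v * 1 * ε := by
            refine Finset.sum_le_sum fun v _ => ?_
            have h1 := FlowSet.coord_le_one (flowOf_mem hnpos v) a
            have h0 : 0 ≤ p θ * β n θ v := mul_nonneg (hp θ).le (hβ0 n hnpos θ v)
            exact mul_le_mul_of_nonneg_right (mul_le_mul_of_nonneg_left h1 h0) hε.le
        _ = p θ * ε * ∑ v : Fin n → A, β n θ v := by
            rw [Finset.mul_sum]; exact Finset.sum_congr rfl fun v _ => by ring
        _ = p θ * ε := by rw [hβ1 n hnpos θ, mul_one]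
    calc ∑ θ, ∑ v : Fin n → A, p θ * β n θ v * flowOf v a * ε
        ≤ ∑ θ, p θ * ε := Finset.sum_le_sum fun θ _ => hb θ
      _ = ε := by rw [← Finset.sum_mul, hp1, one_mul]
  exact hsum1
end
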